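/- arXiv:2407.04456 — 3 statements merged into one kernel-verified Lean document; each statement's English description precedes it below -/
import Mathlib

section
/- For nonnegative functions f₁, f₂ on ℝ^d and exponents 1 < p < ∞ with 1/p + 1/p' = 1, the Choquet integral with respect to the Hausdorff content H^β_∞ satisfies the Hölder-type inequality ∫_Ω f₁ f₂ dH^β_∞ ≤ 2 (∫_Ωف f₁^p dH^β_∞)^{1/p} (∫_Ω f₂^{p'} dH^β_∞)^{1/p'}. -/
open MeasureTheory Set
open scoped ENNReal NNReal

noncomputable section

/-- `ℝ^d` with the Euclidean metric. -/
abbrev Rd (d : ℕ) := EuclideanSpace ℝ (Fin d)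

/-- Coerce a plain function to a point of `ℝ^d`. -/
def toRd (d : ℕ) (a : Fin d → ℝ) : Rd d := WithLp.toLp 2 a

/-- The normalization constant `ω_β = π^{β/2}/Γ(β/2+1)`. -/
def omegaConst (β : ℝ) : ℝ := Real.pi ^ (β / 2) / Real.Gamma (β / 2 + 1)

/-- The Hausdorff content `H^β_∞` in `ℝ^d`, via countable covers by balls. -/
def hContent (d : ℕ) (β : ℝ) (E : Set (Rd d)) : ℝ≥0∞ :=
  ⨅ (c : ℕ → Rd d × ℝ) (_ : E ⊆ ⋃ i, Metric.ball (c i).1 (c i).2),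
    ∑' i, ENNReal.ofReal (omegaConst β * (c i).2 ^ β)

/-- The Choquet integral of a real-valued (nonnegative) function `g` over `Ω`
with respect to a set function `H`. -/
def choquet (d : ℕ) (H : Set (Rd d) → ℝ≥0∞) (Ω : Set (Rd d)) (g : Rd d → ℝ) : ℝ≥0∞ :=
  ∫⁻ t in Set.Ioi (0 : ℝ), H {x | x ∈ Ω ∧ t < g x}

/-- The Choquet integral of an `ℝ≥0∞`-valued function `g` over `Ω`
with respect to a set function `H`. -/
def choquetE (d : ℕ) (H : Set (Rd d) → ℝ≥0∞) (Ω : Set (Rd d)) (g : Rd d → ℝ≥0∞) : ℝ≥0∞ :=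
  ∫⁻ t in Set.Ioi (0 : ℝ), H {x | x ∈ Ω ∧ ENNReal.ofReal t < g x}

/-- Closed axis-parallel cube with corner `a` and side length `l`. -/
def cubeSet (d : ℕ) (a : Fin d → ℝ) (l : ℝ) : Set (Rd d) :=
  {y | ∀ i, a i ≤ y i ∧ y i ≤ a i + l}

/-- Open axis-parallel cube with corner `a` and side length `l`. -/
def cubeO (d : ℕ) (a : Fin d → ℝ) (l : ℝ) : Set (Rd d) :=
  {y | ∀ i, a i < y i ∧ y i < a i + l}

/-- Side length of a dyadic cube of generation `k` in the lattice with unit size `l₀`. -/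
def dSide (l₀ : ℝ) (k : ℤ) : ℝ := l₀ * 2 ^ k

/-- The dyadic cube, indexed by generation `k : ℤ` and position `m : Fin d → ℤ`,
of the dyadic lattice `D(Q₀)` generated by the cube `Q₀` with corner `a₀` and
side length `l₀`. -/
def dSet (d : ℕ) (a₀ : Fin d → ℝ) (l₀ : ℝ) (Q : ℤ × (Fin d → ℤ)) : Set (Rd d) :=
  {y | ∀ i, a₀ i + dSide l₀ Q.1 * (Q.2 i : ℝ) ≤ y i ∧
        y i < a₀ i + dSide l₀ Q.1 * ((Q.2 i : ℝ) + 1)}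

/-- The dyadic Hausdorff content `H^{β,Q₀}_∞`, via countable covers by dyadic cubes. -/
def dContent (d : ℕ) (β : ℝ) (a₀ : Fin d → ℝ) (l₀ : ℝ) (E : Set (Rd d)) : ℝ≥0∞ :=
  ⨅ (c : ℕ → ℤ × (Fin d → ℤ)) (_ : E ⊆ ⋃ i, dSet d a₀ l₀ (c i)),
    ∑' i, ENNReal.ofReal (dSide l₀ (c i).1 ^ β)

/-- The dyadic maximal function associated with `H^{β,Q₀}_∞`. -/
def dMax (d : ℕ) (β : ℝ) (a₀ : Fin d → ℝ) (l₀ : ℝ) (f : Rd d → ℝ) (x : Rd d) : ℝ≥0∞ :=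
  ⨆ (Q : ℤ × (Fin d → ℤ)) (_ : x ∈ dSet d a₀ l₀ Q),
    choquet d (dContent d β a₀ l₀) (dSet d a₀ l₀ Q) (fun y => |f y|)
      / ENNReal.ofReal (dSide l₀ Q.1 ^ β)

/-- The dyadic `β`-dimensional sharp maximal function `M^{#}_{β,Q₀}`. -/
def dSharp (d : ℕ) (β : ℝ) (a₀ : Fin d → ℝ) (l₀ : ℝ) (f : Rd d → ℝ) (x : Rd d) : ℝ≥0∞ :=
  ⨆ (Q : ℤ × (Fin d → ℤ)) (_ : x ∈ dSet d a₀ l₀ Q),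
    ⨅ (c : ℝ),
      choquet d (dContent d β a₀ l₀) (dSet d a₀ l₀ Q) (fun y => |f y - c|)
        / ENNReal.ofReal (dSide l₀ Q.1 ^ β)

/-- The `β`-dimensional sharp maximal function `M^{#}_β`, over all axis-parallel cubes. -/
def sharpMax (d : ℕ) (β : ℝ) (f : Rd d → ℝ) (x : Rd d) : ℝ≥0∞ :=
  ⨆ (a : Fin d → ℝ) (l : ℝ) (_ : 0 < l) (_ : x ∈ cubeSet d a l),
    ⨅ (c : ℝ),
      choquet d (hContent d β) (cubeSet d a l) (fun y => |f y - c|) / ENNReal.ofReal (l ^ β)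

/-- The `β`-dimensional maximal operator `M_{H^β_∞}` over balls. -/
def ballMax (d : ℕ) (β : ℝ) (f : Rd d → ℝ) (x : Rd d) : ℝ≥0∞ :=
  ⨆ (r : ℝ) (_ : 0 < r),
    choquet d (hContent d β) (Metric.ball x r) (fun y => |f y|)
      / hContent d β (Metric.ball x r)

/-- The Riesz normalization constant `γ(α)`. -/
def rieszConst (d : ℕ) (α : ℝ) : ℝ :=
  Real.pi ^ ((d : ℝ) / 2) * 2 ^ α * Real.Gamma (α / 2) / Real.Gamma (((d : ℝ) - α) / 2)

/-- The Riesz potential `I_α μ` of a measure. -/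
def rieszM (d : ℕ) (α : ℝ) (μ : Measure (Rd d)) (x : Rd d) : ℝ≥0∞ :=
  (ENNReal.ofReal (rieszConst d α))⁻¹ * ∫⁻ y, ENNReal.ofReal (dist x y ^ (α - (d : ℝ))) ∂μ

/-- The (real-valued) Riesz potential `I_α f` of a function. -/
def rieszR (d : ℕ) (α : ℝ) (f : Rd d → ℝ) (x : Rd d) : ℝ :=
  (rieszConst d α)⁻¹ * ∫ y, f y * dist x y ^ (α - (d : ℝ))

/-- The fractional maximal function `M_α μ` of a measure. -/
def fracMaxM (d : ℕ) (α : ℝ) (μ : Measure (Rd d)) (x : Rd d) : ℝ≥0∞ :=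
  ⨆ (a : Fin d → ℝ) (l : ℝ) (_ : 0 < l) (_ : x ∈ cubeSet d a l),
    μ (cubeSet d a l) * ENNReal.ofReal (l ^ (α - (d : ℝ)))

/-- The fractional maximal function `M_α f` of a function. -/
def fracMaxF (d : ℕ) (α : ℝ) (f : Rd d → ℝ) (x : Rd d) : ℝ≥0∞ :=
  ⨆ (a : Fin d → ℝ) (l : ℝ) (_ : 0 < l) (_ : x ∈ cubeSet d a l),
    (∫⁻ y in cubeSet d a l, ENNReal.ofReal |f y|) * ENNReal.ofReal (l ^ (α - (d : ℝ)))

/-- The weak `L^{p,∞}(H^β_∞)` quasinorm. -/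
def weakNorm (d : ℕ) (β : ℝ) (p : ℝ) (g : Rd d → ℝ≥0∞) : ℝ≥0∞ :=
  ⨆ (t : ℝ) (_ : 0 < t),
    ENNReal.ofReal t * hContent d β {x | ENNReal.ofReal t < g x} ^ (1 / p)

/-- The local Morrey norm `‖μ‖_{M^β(Ω)}`. -/
def morreyNorm (d : ℕ) (β : ℝ) (μ : Measure (Rd d)) (Ω : Set (Rd d)) : ℝ≥0∞ :=
  ⨆ (x : Rd d) (_ : x ∈ Ω) (r : ℝ) (_ : 0 < r),
    μ (Metric.ball x r ∩ Ω) / ENNReal.ofReal (r ^ β)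

/-- Generation-`k` cell at position `m` of a dyadic grid with generation offsets `o`. -/
def gcell (d : ℕ) (o : ℤ → Fin d → ℝ) (k : ℤ) (m : Fin d → ℤ) : Set (Rd d) :=
  {y | ∀ i, o k i + 2 ^ k * (m i : ℝ) ≤ y i ∧ y i < o k i + 2 ^ k * ((m i : ℝ) + 1)}

/-- A dyadic grid in `ℝ^d`: each generation `k` consists of half-open cubes of side `2^k`
partitioning `ℝ^d`, and consecutive generations are nested. -/
structure DyadicGrid (d : ℕ) where
  o : ℤ → Fin d → ℝ
  nested : ∀ k m, ∃ m', gcell d o k m ⊆ gcell d o (k + 1) m'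

/-- The dyadic Riesz potential `I^D_α μ` with respect to a dyadic grid. -/
def dyadicRiesz (d : ℕ) (G : DyadicGrid d) (α : ℝ) (μ : Measure (Rd d)) (x : Rd d) : ℝ≥0∞ :=
  ∑' p : ℤ × (Fin d → ℤ),
    Set.indicator (gcell d G.o p.1 p.2)
      (fun _ => μ (gcell d G.o p.1 p.2) * ENNReal.ofReal (((2 : ℝ) ^ p.1) ^ (α - (d : ℝ)))) x

/-- The exponential on `ℝ≥0∞`. -/
def expE (t : ℝ≥0∞) : ℝ≥0∞ := if t = ∞ then ∞ else ENNReal.ofReal (Real.exp t.toReal)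
namespace ChoquetHolderAux

variable {d : ℕ} {β : ℝ}

lemma hContent_mono {E F : Set (Rd d)} (h : E ⊆ F) : hContent d β E ≤ hContent d β F := by
  refine le_iInf₂ fun c hc => iInf₂_le c (h.trans hc)

lemma hContent_empty (hβ : 0 < β) : hContent d β (∅ : Set (Rd d)) = 0 := by
  refine le_antisymm ?_ zero_le
  have h := iInf₂_le (f := fun (c : ℕ → Rd d × ℝ)
      (_ : (∅ : Set (Rd d)) ⊆ ⋃ i, Metric.ball (c i).1 (c i).2) =>
      ∑' i, ENNReal.ofReal (omegaConst β * (c i).2 ^ β))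
    (fun _ => ((0 : Rd d), (0 : ℝ))) (empty_subset _)
  simpa [hContent, Real.zero_rpow hβ.ne'] using h

lemma hContent_iUnion_le (E : ℕ → Set (Rd d)) :
    hContent d β (⋃ n, E n) ≤ ∑' n, hContent d β (E n) := by
  refine ENNReal.le_of_forall_pos_le_add fun ε hε hfin => ?_
  obtain ⟨δ, hδ, hδsum⟩ :=
    ENNReal.exists_pos_sum_of_countable (ε := (ε : ℝ≥0∞)) (by exact_mod_cast hε.ne') ℕ
  have hEn : ∀ n, hContent d β (E n) < hContent d β (E n) + δ n := fun n =>
    ENNReal.lt_add_right ((ENNReal.le_tsum n).trans_lt hfin).ne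
      (by exact_mod_cast (hδ n).ne')
  have hex : ∀ n, ∃ c : ℕ → Rd d × ℝ,
      (E n ⊆ ⋃ i, Metric.ball (c i).1 (c i).2) ∧
      ∑' i, ENNReal.ofReal (omegaConst β * (c i).2 ^ β) ≤ hContent d β (E n) + δ n := by
    intro n
    have h : (⨅ (c : ℕ → Rd d × ℝ) (_ : E n ⊆ ⋃ i, Metric.ball (c i).1 (c i).2),
        ∑' i, ENNReal.ofReal (omegaConst β * (c i).2 ^ β)) < hContent d β (E n) + δ n := hEn n
    obtain ⟨c, hc⟩ := iInf_lt_iff.mp h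
    obtain ⟨hcov, hsum⟩ := iInf_lt_iff.mp hc
    exact ⟨c, hcov, hsum.le⟩
  choose c hcov hsum using hex
  set e : ℕ ≃ ℕ × ℕ := (Denumerable.eqv (ℕ × ℕ)).symm with he
  have hC : hContent d β (⋃ n, E n) ≤
      ∑' k, ENNReal.ofReal (omegaConst β * ((c (e k).1 (e k).2).2) ^ β) := by
    refine iInf₂_le (fun k => c (e k).1 (e k).2) ?_
    rintro x hx
    obtain ⟨n, hn⟩ := mem_iUnion.mp hx
    obtain ⟨i, hxball⟩ := mem_iUnion.mp (hcov n hn)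
    refine mem_iUnion.mpr ⟨e.symm (n, i), ?_⟩
    simpa using hxball
  refine hC.trans ?_
  have h1 : ∑' k, ENNReal.ofReal (omegaConst β * ((c (e k).1 (e k).2).2) ^ β) =
      ∑' pq : ℕ × ℕ, ENNReal.ofReal (omegaConst β * ((c pq.1 pq.2).2) ^ β) :=
    e.tsum_eq (fun pq => ENNReal.ofReal (omegaConst β * ((c pq.1 pq.2).2) ^ β))
  rw [h1]
  have h2 : ∑' (pq : ℕ × ℕ), ENNReal.ofReal (omegaConst β * ((c pq.1 pq.2).2) ^ β) =
      ∑' (n : ℕ) (i : ℕ), ENNReal.ofReal (omegaConst β * ((c n i).2) ^ β) :=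
    ENNReal.tsum_prod (f := fun n i => ENNReal.ofReal (omegaConst β * ((c n i).2) ^ β))
  rw [h2]
  calc (∑' (n : ℕ) (i : ℕ), ENNReal.ofReal (omegaConst β * ((c n i).2) ^ β))
      ≤ ∑' n, (hContent d β (E n) + δ n) := ENNReal.tsum_le_tsum hsum
    _ = (∑' n, hContent d β (E n)) + ∑' n, (δ n : ℝ≥0∞) := ENNReal.tsum_add
    _ ≤ (∑' n, hContent d β (E n)) + ε := add_le_add le_rfl hδsum.le

lemma hContent_union_le (hβ : 0 < β) (E F : Set (Rd d)) :
    hContent d β (E ∪ F) ≤ hContent d β E + hContent d β F := by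
  set G : ℕ → Set (Rd d) := fun n => if n = 0 then E else if n = 1 then F else ∅ with hG
  have hsub : E ∪ F ⊆ ⋃ n, G n := by
    rintro x (hx | hx)
    · exact mem_iUnion.mpr ⟨0, by simp [hG, hx]⟩
    · exact mem_iUnion.mpr ⟨1, by simp [hG, hx]⟩
  have h := (hContent_mono (β := β) hsub).trans (hContent_iUnion_le (β := β) G)
  have htsum : ∑' n, hContent d β (G n) = hContent d β E + hContent d β F := by
    have hz : ∀ b ∉ ({0, 1} : Finset ℕ), hContent d β (G b) = 0 := by
      intro b hb
      simp only [Finset.mem_insert, Finset.mem_singleton, not_or] at hb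
      simp [hG, hb.1, hb.2, hContent_empty hβ]
    rw [tsum_eq_sum hz, Finset.sum_pair (by norm_num : (0 : ℕ) ≠ 1)]
    simp [hG]
  rwa [htsum] at h

lemma antitone_level (Ω : Set (Rd d)) (g : Rd d → ℝ) :
    Antitone (fun t => hContent d β {x | x ∈ Ω ∧ t < g x}) := fun a b hab =>
  hContent_mono fun x hx => ⟨hx.1, hab.trans_lt hx.2⟩

lemma choquet_mono {Ω : Set (Rd d)} {g₁ g₂ : Rd d → ℝ} (h : ∀ x ∈ Ω, g₁ x ≤ g₂ x) :
    choquet d (hContent d β) Ω g₁ ≤ choquet d (hContent d β) Ω g₂ :=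
  lintegral_mono fun t => hContent_mono fun x hx => ⟨hx.1, hx.2.trans_le (h x hx.1)⟩

lemma lint_scale (F : ℝ → ℝ≥0∞) (hF : Measurable F) {c : ℝ} (hc : 0 < c) :
    ∫⁻ t in Set.Ioi (0 : ℝ), F (c⁻¹ * t) =
      ENNReal.ofReal c * ∫⁻ s in Set.Ioi (0 : ℝ), F s := by
  have hpre : (fun t : ℝ => c⁻¹ * t) ⁻¹' Set.Ioi (0 : ℝ) = Set.Ioi (0 : ℝ) := by
    ext t
    simp only [Set.mem_preimage, Set.mem_Ioi]
    constructor
    · intro h; nlinarith [inv_pos.mpr hc]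
    · intro h; positivity
  have hmap : Measure.map (fun t : ℝ => c⁻¹ * t) (volume.restrict (Set.Ioi (0 : ℝ))) =
      ENNReal.ofReal c • volume.restrict (Set.Ioi (0 : ℝ)) := by
    rw [← hpre, ← Measure.restrict_map (measurable_const_mul c⁻¹) measurableSet_Ioi,
      Real.map_volume_mul_left (inv_ne_zero hc.ne'), inv_inv,
      abs_of_pos hc, Measure.restrict_smul, hpre]
  calc ∫⁻ t in Set.Ioi (0 : ℝ), F (c⁻¹ * t)
      = ∫⁻ s, F s ∂(Measure.map (fun t : ℝ => c⁻¹ * t) (volume.restrict (Set.Ioi (0 : ℝ)))) :=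
        (lintegral_map hF (measurable_const_mul c⁻¹)).symm
    _ = ENNReal.ofReal c * ∫⁻ s in Set.Ioi (0 : ℝ), F s := by
        rw [hmap, lintegral_smul_measure, smul_eq_mul]

lemma choquet_smul (Ω : Set (Rd d)) (g : Rd d → ℝ) {c : ℝ} (hc : 0 < c) :
    choquet d (hContent d β) Ω (fun x => c * g x) =
      ENNReal.ofReal c * choquet d (hContent d β) Ω g := by
  have hset : ∀ t : ℝ, {x | x ∈ Ω ∧ t < c * g x} = {x | x ∈ Ω ∧ c⁻¹ * t < g x} := by
    intro t
    ext x
    simp only [Set.mem_setOf_eq, and_congr_right_iff]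
    intro _
    rw [inv_mul_eq_div, div_lt_iff₀ hc, mul_comm]
  show (∫⁻ t in Set.Ioi (0 : ℝ), hContent d β {x | x ∈ Ω ∧ t < c * g x}) = _
  simp_rw [hset]
  exact lint_scale _ (antitone_level Ω g).measurable hc

lemma choquet_add_le (hβ : 0 < β) (Ω : Set (Rd d)) (g₁ g₂ : Rd d → ℝ) :
    choquet d (hContent d β) Ω (fun x => g₁ x + g₂ x) ≤
      2 * choquet d (hContent d β) Ω g₁ + 2 * choquet d (hContent d β) Ω g₂ := by
  have h1 : choquet d (hContent d β) Ω (fun x => g₁ x + g₂ x) ≤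
      ∫⁻ t in Set.Ioi (0 : ℝ),
        (hContent d β {x | x ∈ Ω ∧ t < 2 * g₁ x} +
          hContent d β {x | x ∈ Ω ∧ t < 2 * g₂ x}) := by
    refine lintegral_mono fun t => ?_
    refine le_trans (hContent_mono ?_) (hContent_union_le hβ _ _)
    rintro x ⟨hx, hlt⟩
    by_cases h : t < 2 * g₁ x
    · exact Or.inl ⟨hx, h⟩
    · refine Or.inr ⟨hx, ?_⟩
      push_neg at h
      have hlt' : t < g₁ x + g₂ x := hlt
      linarith
  rw [lintegral_add_left (antitone_level Ω (fun x => 2 * g₁ x)).measurable] at h1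
  have e1 : (∫⁻ t in Set.Ioi (0 : ℝ), hContent d β {x | x ∈ Ω ∧ t < 2 * g₁ x}) =
      choquet d (hContent d β) Ω (fun x => 2 * g₁ x) := rfl
  have e2 : (∫⁻ t in Set.Ioi (0 : ℝ), hContent d β {x | x ∈ Ω ∧ t < 2 * g₂ x}) =
      choquet d (hContent d β) Ω (fun x => 2 * g₂ x) := rfl
  rw [e1, e2, choquet_smul Ω g₁ two_pos, choquet_smul Ω g₂ two_pos] at h1
  simpa [ENNReal.ofReal_ofNat] using h1

lemma level_zero_of_choquet_zero {Ω : Set (Rd d)} {h : Rd d → ℝ}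
    (hch : choquet d (hContent d β) Ω h = 0) :
    ∀ t > (0 : ℝ), hContent d β {x | x ∈ Ω ∧ t < h x} = 0 := by
  intro t ht
  by_contra h0
  set F : ℝ → ℝ≥0∞ := fun s => hContent d β {x | x ∈ Ω ∧ s < h x} with hF
  have hmono : Antitone F := antitone_level Ω h
  have hlb : F t * ENNReal.ofReal t ≤ choquet d (hContent d β) Ω h :=
    calc F t * ENNReal.ofReal t = ∫⁻ _ in Set.Ioo (0 : ℝ) t, F t := by
          rw [setLIntegral_const, Real.volume_Ioo, sub_zero]
      _ ≤ ∫⁻ s in Set.Ioo (0 : ℝ) t, F s :=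
          setLIntegral_mono hmono.measurable fun s hs => hmono hs.2.le
      _ ≤ ∫⁻ s in Set.Ioi (0 : ℝ), F s :=
          lintegral_mono_set fun s hs => hs.1
  rw [hch] at hlb
  have := le_antisymm hlb zero_le
  rcases mul_eq_zero.mp this with h' | h'
  · exact h0 h'
  · exact absurd h' (by simp [ENNReal.ofReal_eq_zero, not_le, ht])

lemma prod_vanish (hβ : 0 < β) {Ω : Set (Rd d)} {f g : Rd d → ℝ} {r : ℝ} (hr : 0 < r)
    (hf : ∀ x, 0 ≤ f x)
    (hzero : choquet d (hContent d β) Ω (fun x => f x ^ r) = 0) :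
    choquet d (hContent d β) Ω (fun x => g x * f x) = 0 := by
  have hlevel : ∀ s > (0 : ℝ), hContent d β {x | x ∈ Ω ∧ s < f x} = 0 := by
    intro s hs
    have h1 := level_zero_of_choquet_zero hzero (s ^ r) (Real.rpow_pos_of_pos hs r)
    refine le_antisymm (le_trans (hContent_mono ?_) h1.le) zero_le
    rintro x ⟨hx, hlt⟩
    exact ⟨hx, Real.rpow_lt_rpow hs.le hlt hr⟩
  have hzero' : ∀ t ∈ Set.Ioi (0 : ℝ),
      hContent d β {x | x ∈ Ω ∧ t < g x * f x} = 0 := by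
    intro t ht
    have hsub : {x | x ∈ Ω ∧ t < g x * f x} ⊆
        ⋃ n : ℕ, {x | x ∈ Ω ∧ 1 / ((n : ℝ) + 1) < f x} := by
      rintro x ⟨hx, hlt⟩
      have hfx : 0 < f x := by
        rcases (hf x).lt_or_eq with h' | h'
        · exact h'
        · exfalso; rw [← h', mul_zero] at hlt; exact absurd hlt (not_lt.mpr ht.le)
      obtain ⟨n, hn⟩ := exists_nat_one_div_lt hfx
      exact mem_iUnion.mpr ⟨n, hx, hn⟩
    refine le_antisymm ?_ zero_le
    refine le_trans (hContent_mono hsub) ?_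
    refine le_trans (hContent_iUnion_le _) ?_
    have hz : ∀ n : ℕ, hContent d β {x | x ∈ Ω ∧ 1 / ((n : ℝ) + 1) < f x} = 0 := fun n =>
      hlevel _ (by positivity)
    simp only [hz, tsum_zero, le_refl]
  show (∫⁻ t in Set.Ioi (0 : ℝ), hContent d β {x | x ∈ Ω ∧ t < g x * f x}) = 0
  refine le_antisymm ?_ zero_le
  calc (∫⁻ t in Set.Ioi (0 : ℝ), hContent d β {x | x ∈ Ω ∧ t < g x * f x})
      ≤ ∫⁻ _ in Set.Ioi (0 : ℝ), (0 : ℝ≥0∞) :=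
        setLIntegral_mono measurable_const fun t ht => (hzero' t ht).le
    _ = 0 := by simp

lemma young_opt {p q : ℝ} (hp : 0 < p) (hq : 0 < q) (hpq : 1 / p + 1 / q = 1)
    {x y : ℝ} (hx : 0 < x) (hy : 0 < y) :
    ∃ ε : ℝ, 0 < ε ∧ ε ^ p / p * x + ε ^ (-q) / q * y = x ^ (1 / p) * y ^ (1 / q) := by
  set u := Real.log x with hu
  set v := Real.log y with hv
  set t := (v - u) / (p * q) with htdef
  refine ⟨Real.exp t, Real.exp_pos _, ?_⟩
  have hxe : x = Real.exp u := (Real.exp_log hx).symm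
  have hye : y = Real.exp v := (Real.exp_log hy).symm
  have hA1 : t * p + u = u * (1 / p) + v * (1 / q) := by
    have h1 : t * p = v * (1 / q) - u * (1 / q) := by
      rw [htdef]; field_simp
    have h2 : u * (1 / p) + u * (1 / q) = u := by
      calc u * (1 / p) + u * (1 / q) = u * (1 / p + 1 / q) := by ring
        _ = u := by rw [hpq, mul_one]
    linarith
  have hA2 : t * (-q) + v = u * (1 / p) + v * (1 / q) := by
    have h1 : t * (-q) = u * (1 / p) - v * (1 / p) := by
      rw [htdef]; field_simp; ring
    have h2 : v * (1 / p) + v * (1 / q) = v := by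
      calc v * (1 / p) + v * (1 / q) = v * (1 / p + 1 / q) := by ring
        _ = v := by rw [hpq, mul_one]
    linarith
  rw [hxe, hye, ← Real.exp_mul, ← Real.exp_mul, ← Real.exp_mul, ← Real.exp_mul]
  have e1 : Real.exp (t * p) * Real.exp u =
      Real.exp (u * (1 / p)) * Real.exp (v * (1 / q)) := by
    rw [← Real.exp_add, ← Real.exp_add, hA1]
  have e2 : Real.exp (t * (-q)) * Real.exp v =
      Real.exp (u * (1 / p)) * Real.exp (v * (1 / q)) := by
    rw [← Real.exp_add, ← Real.exp_add, hA2]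
  linear_combination (1 / p) * e1 + (1 / q) * e2 +
    Real.exp (u * (1 / p)) * Real.exp (v * (1 / q)) * hpq

end ChoquetHolderAux

open ChoquetHolderAux in
/-- Hölder's inequality for Choquet integrals against Hausdorff content. -/
theorem choquet_holder (d : ℕ) (β : ℝ) (hβ : 0 < β) (hβd : β ≤ d) (Ω : Set (Rd d))
    (p p' : ℝ) (hp : 1 < p) (hpp' : 1 / p + 1 / p' = 1)
    (f₁ f₂ : Rd d → ℝ) (h₁ : ∀ x, 0 ≤ f₁ x) (h₂ : ∀ x, 0 ≤ f₂ x) :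
    choquet d (hContent d β) Ω (fun x => f₁ x * f₂ x) ≤
      2 * (choquet d (hContent d β) Ω (fun x => f₁ x ^ p)) ^ (1 / p) *
        (choquet d (hContent d β) Ω (fun x => f₂ x ^ p')) ^ (1 / p') := by
  have hp0 : (0 : ℝ) < p := lt_trans one_pos hp
  have h1p : 1 / p < 1 := (div_lt_one hp0).mpr hp
  have h1p0 : 0 < 1 / p := by positivity
  have hq0' : 0 < 1 / p' := by linarith
  have hq0 : 0 < p' := one_div_pos.mp hq0'
  have hq1p0 : 0 < 1 / p' := hq0'
  set X := choquet d (hContent d β) Ω (fun x => f₁ x ^ p) with hXdef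
  set Y := choquet d (hContent d β) Ω (fun x => f₂ x ^ p') with hYdef
  by_cases hX0 : X = 0
  · have h0 : choquet d (hContent d β) Ω (fun x => f₁ x * f₂ x) = 0 := by
      have hcomm : (fun x => f₁ x * f₂ x) = fun x => f₂ x * f₁ x := funext fun x => mul_comm _ _
      rw [hcomm]
      exact prod_vanish hβ hp0 h₁ (hXdef.symm.trans hX0)
    rw [h0]; exact zero_le
  by_cases hY0 : Y = 0
  · have h0 : choquet d (hContent d β) Ω (fun x => f₁ x * f₂ x) = 0 :=
      prod_vanish hβ hq0 h₂ (hYdef.symm.trans hY0)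
    rw [h0]; exact zero_le
  by_cases hXt : X = ⊤
  · have hYne : Y ^ (1 / p') ≠ 0 := by
      intro h
      rcases ENNReal.rpow_eq_zero_iff.mp h with ⟨h1, _⟩ | ⟨_, h2⟩
      · exact hY0 h1
      · linarith
    have hR : 2 * X ^ (1 / p) * Y ^ (1 / p') = ⊤ := by
      rw [hXt, ENNReal.top_rpow_of_pos h1p0,
        ENNReal.mul_top (by norm_num : (2 : ℝ≥0∞) ≠ 0), ENNReal.top_mul hYne]
    rw [hR]; exact le_top
  by_cases hYt : Y = ⊤
  · have hXne : X ^ (1 / p) ≠ 0 := by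
      intro h
      rcases ENNReal.rpow_eq_zero_iff.mp h with ⟨h1, _⟩ | ⟨_, h2⟩
      · exact hX0 h1
      · linarith
    have hR : 2 * X ^ (1 / p) * Y ^ (1 / p') = ⊤ := by
      rw [hYt, ENNReal.top_rpow_of_pos hq1p0,
        ENNReal.mul_top (mul_ne_zero (by norm_num : (2 : ℝ≥0∞) ≠ 0) hXne)]
    rw [hR]; exact le_top
  have hx : 0 < X.toReal := ENNReal.toReal_pos hX0 hXt
  have hy : 0 < Y.toReal := ENNReal.toReal_pos hY0 hYt
  obtain ⟨ε, hε, hεeq⟩ := young_opt hp0 hq0 hpp' hx hy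
  have hc1 : 0 < ε ^ p / p := div_pos (Real.rpow_pos_of_pos hε p) hp0
  have hc2 : 0 < ε ^ (-p') / p' := div_pos (Real.rpow_pos_of_pos hε (-p')) hq0
  have hconj : Real.HolderConjugate p p' := Real.holderConjugate_iff.mpr ⟨hp, by simpa [one_div] using hpp'⟩
  have hkey : ∀ x, f₁ x * f₂ x ≤ ε ^ p / p * f₁ x ^ p + ε ^ (-p') / p' * f₂ x ^ p' := by
    intro x
    have hyoung := Real.young_inequality_of_nonneg (mul_nonneg hε.le (h₁ x))
      (div_nonneg (h₂ x) hε.le) hconj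
    have e0 : (ε * f₁ x) * (f₂ x / ε) = f₁ x * f₂ x := by
      field_simp
    have e1 : (ε * f₁ x) ^ p = ε ^ p * f₁ x ^ p := Real.mul_rpow hε.le (h₁ x)
    have e2 : (f₂ x / ε) ^ p' = f₂ x ^ p' / ε ^ p' := Real.div_rpow (h₂ x) hε.le p'
    calc f₁ x * f₂ x = (ε * f₁ x) * (f₂ x / ε) := e0.symm
      _ ≤ (ε * f₁ x) ^ p / p + (f₂ x / ε) ^ p' / p' := hyoung
      _ = ε ^ p / p * f₁ x ^ p + ε ^ (-p') / p' * f₂ x ^ p' := by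
          rw [e1, e2, Real.rpow_neg hε.le]; ring
  have hm1 : ENNReal.ofReal (ε ^ p / p) * X = ENNReal.ofReal (ε ^ p / p * X.toReal) := by
    rw [ENNReal.ofReal_mul hc1.le, ENNReal.ofReal_toReal hXt]
  have hm2 : ENNReal.ofReal (ε ^ (-p') / p') * Y =
      ENNReal.ofReal (ε ^ (-p') / p' * Y.toReal) := by
    rw [ENNReal.ofReal_mul hc2.le, ENNReal.ofReal_toReal hYt]
  have hchain : choquet d (hContent d β) Ω (fun x => f₁ x * f₂ x) ≤
      2 * ENNReal.ofReal (ε ^ p / p * X.toReal + ε ^ (-p') / p' * Y.toReal) := by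
    calc choquet d (hContent d β) Ω (fun x => f₁ x * f₂ x)
        ≤ choquet d (hContent d β) Ω
            (fun x => ε ^ p / p * f₁ x ^ p + ε ^ (-p') / p' * f₂ x ^ p') :=
          choquet_mono fun x _ => hkey x
      _ ≤ 2 * choquet d (hContent d β) Ω (fun x => ε ^ p / p * f₁ x ^ p) +
          2 * choquet d (hContent d β) Ω (fun x => ε ^ (-p') / p' * f₂ x ^ p') :=
          choquet_add_le hβ Ω _ _
      _ = 2 * (ENNReal.ofReal (ε ^ p / p) * X) +
          2 * (ENNReal.ofReal (ε ^ (-p') / p') * Y) := by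
          rw [choquet_smul Ω _ hc1, choquet_smul Ω _ hc2, hXdef, hYdef]
      _ = 2 * ENNReal.ofReal (ε ^ p / p * X.toReal + ε ^ (-p') / p' * Y.toReal) := by
          rw [hm1, hm2, ENNReal.ofReal_add (by positivity) (by positivity)]
          ring
  rw [hεeq] at hchain
  calc choquet d (hContent d β) Ω (fun x => f₁ x * f₂ x)
      ≤ 2 * ENNReal.ofReal (X.toReal ^ (1 / p) * Y.toReal ^ (1 / p')) := hchain
    _ = 2 * X ^ (1 / p) * Y ^ (1 / p') := by
        rw [ENNReal.ofReal_mul (by positivity), ← ENNReal.ofReal_rpow_of_pos hx,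
          ← ENNReal.ofReal_rpow_of_pos hy, ENNReal.ofReal_toReal hXt,
          ENNReal.ofReal_toReal hYt, mul_assoc]
end
end

section
/- Given a family {Q_j} of non-overlapping dyadic cubes in a dyadic lattice D(Q₀), there is a subfamily {Q_{j_k}} satisfying the packing condition Σ_{Q_{j_k} ⊆ Q} ℓ(Q_{j_k})^β ≤ 2 ℓ(Q)^β for every dyadic cube Q ∈ D(Q₀), and moreover H^{β,Q₀}_∞(∪_j Q_j) ≤ Σ_k ℓ(Q_{j_k})^β ≤ 2 H^{β,Q₀}_∞(∪_j Q_j). -/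
open MeasureTheory Set
open scoped ENNReal NNReal

noncomputable section

section PackingAux

variable {d : ℕ} {β : ℝ} {a₀ : Fin d → ℝ} {l₀ : ℝ}

lemma dSide_pos (hl₀ : 0 < l₀) (k : ℤ) : 0 < dSide l₀ k :=
  mul_pos hl₀ (zpow_pos two_pos k)

lemma dSide_mono (hl₀ : 0 < l₀) {k k' : ℤ} (h : k ≤ k') : dSide l₀ k ≤ dSide l₀ k' :=
  mul_le_mul_of_nonneg_left (zpow_le_zpow_right₀ one_le_two h) hl₀.le

/-- corner point of a dyadic cube -/
def dCorner (d : ℕ) (a₀ : Fin d → ℝ) (l₀ : ℝ) (p : ℤ × (Fin d → ℤ)) : Rd d :=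
  toRd d (fun i => a₀ i + dSide l₀ p.1 * (p.2 i : ℝ))

lemma dCorner_mem (hl₀ : 0 < l₀) (p : ℤ × (Fin d → ℤ)) :
    dCorner d a₀ l₀ p ∈ dSet d a₀ l₀ p := by
  intro i
  constructor
  · exact le_refl _
  · have := dSide_pos (l₀ := l₀) hl₀ p.1
    simp only [dCorner, toRd]
    nlinarith

lemma dSet_nonempty (hl₀ : 0 < l₀) (p : ℤ × (Fin d → ℤ)) :
    (dSet d a₀ l₀ p).Nonempty := ⟨_, dCorner_mem hl₀ p⟩

/-- 1-d dyadic interval inclusion from a common point, smaller generation into larger. -/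
lemma interval_subset (hl₀ : 0 < l₀) {k k' : ℤ} (hk : k ≤ k') {m m' : ℤ} {c x : ℝ}
    (h1 : c + dSide l₀ k * m ≤ x) (h2 : x < c + dSide l₀ k * (m + 1))
    (h3 : c + dSide l₀ k' * m' ≤ x) (h4 : x < c + dSide l₀ k' * (m' + 1)) :
    c + dSide l₀ k' * m' ≤ c + dSide l₀ k * m ∧
      c + dSide l₀ k * (m + 1) ≤ c + dSide l₀ k' * (m' + 1) := by
  set s := dSide l₀ k with hs
  have hspos : 0 < s := dSide_pos hl₀ k
  -- t = 2^(k'-k) as a natural number cast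
  set n : ℕ := (k' - k).toNat with hn
  have hkn : (k' : ℤ) = k + n := by
    simp [hn, Int.toNat_of_nonneg (sub_nonneg.2 hk)]
  have hts : dSide l₀ k' = s * (2 ^ n : ℕ) := by
    rw [dSide, hkn, zpow_add₀ (two_ne_zero), hs, dSide, zpow_natCast]
    push_cast
    ring
  set t : ℤ := ((2 ^ n : ℕ) : ℤ) with ht
  have htR : ((2:ℝ) ^ n) = (t : ℝ) := by push_cast [ht]; ring
  have hts' : dSide l₀ k' = s * (t : ℝ) := by rw [hts, ht]; push_cast; ring
  -- real inequalities
  have e1 : s * (m:ℝ) < s * (t * (m' + 1)) := by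
    have := lt_of_le_of_lt h1 h4
    rw [hts'] at this; nlinarith
  have e2 : s * ((t:ℝ) * m') < s * (m + 1) := by
    have := lt_of_le_of_lt h3 h2
    rw [hts'] at this; nlinarith
  have i1 : (m:ℝ) < t * (m' + 1) := lt_of_mul_lt_mul_left (by nlinarith) hspos.le
  have i2 : (t:ℝ) * m' < m + 1 := lt_of_mul_lt_mul_left (by nlinarith) hspos.le
  have z1 : m < t * (m' + 1) := by exact_mod_cast (by push_cast at i1 ⊢; exact i1 : (m:ℝ) < ((t * (m' + 1) : ℤ) : ℝ))
  have z2 : t * m' < m + 1 := by exact_mod_cast (by push_cast at i2 ⊢; exact i2 : ((t * m' : ℤ):ℝ) < ((m + 1 : ℤ) : ℝ))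
  have z1' : m + 1 ≤ t * (m' + 1) := z1
  have z2' : t * m' ≤ m := by omega
  constructor
  · rw [hts']
    have : (t:ℝ) * m' ≤ m := by exact_mod_cast z2'
    nlinarith
  · rw [hts']
    have : (m:ℝ) + 1 ≤ t * (m' + 1) := by exact_mod_cast z1'
    nlinarith

/-- dyadic cubes: common point and `k ≤ k'` implies inclusion -/
lemma dSet_subset_of_mem (hl₀ : 0 < l₀) {p q : ℤ × (Fin d → ℤ)} (hk : p.1 ≤ q.1)
    {x : Rd d} (hxp : x ∈ dSet d a₀ l₀ p) (hxq : x ∈ dSet d a₀ l₀ q) :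
    dSet d a₀ l₀ p ⊆ dSet d a₀ l₀ q := by
  intro y hy i
  obtain ⟨h1, h2⟩ := hxp i
  obtain ⟨h3, h4⟩ := hxq i
  obtain ⟨c1, c2⟩ := interval_subset hl₀ hk h1 h2 h3 h4
  obtain ⟨hy1, hy2⟩ := hy i
  exact ⟨le_trans c1 hy1, lt_of_lt_of_le hy2 c2⟩

/-- dichotomy -/
lemma dSet_dichotomy (hl₀ : 0 < l₀) (p q : ℤ × (Fin d → ℤ))
    (h : (dSet d a₀ l₀ p ∩ dSet d a₀ l₀ q).Nonempty) :
    dSet d a₀ l₀ p ⊆ dSet d a₀ l₀ q ∨ dSet d a₀ l₀ q ⊆ dSet d a₀ l₀ p := by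
  obtain ⟨x, hxp, hxq⟩ := h
  rcases le_total p.1 q.1 with hk | hk
  · exact Or.inl (dSet_subset_of_mem hl₀ hk hxp hxq)
  · exact Or.inr (dSet_subset_of_mem hl₀ hk hxq hxp)

end PackingAux
section PackingAux2

variable {d : ℕ} {β : ℝ} {a₀ : Fin d → ℝ} {l₀ : ℝ}

lemma dSide_le_of_subset (hd : 0 < d) (hl₀ : 0 < l₀) {p q : ℤ × (Fin d → ℤ)}
    (h : dSet d a₀ l₀ p ⊆ dSet d a₀ l₀ q) : dSide l₀ p.1 ≤ dSide l₀ q.1 := by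
  set s := dSide l₀ p.1 with hs
  set s' := dSide l₀ q.1 with hs'
  have hspos : 0 < s := dSide_pos hl₀ p.1
  set i0 : Fin d := ⟨0, hd⟩ with hi0
  set x : Rd d := dCorner d a₀ l₀ p with hx
  have hxp : x ∈ dSet d a₀ l₀ p := dCorner_mem hl₀ p
  have key : ∀ ε : ℝ, 0 ≤ ε → ε < s →
      x i0 + ε < a₀ i0 + s' * ((q.2 i0 : ℝ) + 1) := by
    intro ε hε1 hε2
    set y : Rd d := toRd d (fun i => x i + (if i = i0 then ε else 0)) with hy
    have hyval : ∀ i, y i = x i + (if i = i0 then ε else 0) := fun i => rfl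
    have hyp : y ∈ dSet d a₀ l₀ p := by
      intro i
      obtain ⟨g1, g2⟩ := hxp i
      rw [hyval i]
      by_cases hii : i = i0
      · rw [if_pos hii]
        have hxi : x i = a₀ i + s * (p.2 i : ℝ) := rfl
        constructor
        · linarith
        · rw [hxi]
          have hexp : s * ((p.2 i : ℝ) + 1) = s * (p.2 i : ℝ) + s := by ring
          rw [hexp]; linarith
      · rw [if_neg hii, add_zero]; exact ⟨g1, g2⟩
    have hyq := h hyp i0
    have := hyq.2
    rw [hyval i0, if_pos rfl] at this
    exact this
  have hxq := h hxp i0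
  have hupper : x i0 + s ≤ a₀ i0 + s' * ((q.2 i0 : ℝ) + 1) := by
    by_contra hcon
    push_neg at hcon
    have h0 : x i0 < a₀ i0 + s' * ((q.2 i0 : ℝ) + 1) := hxq.2
    have := key (a₀ i0 + s' * ((q.2 i0 : ℝ) + 1) - x i0) (by linarith) (by linarith)
    linarith
  have hlow : a₀ i0 + s' * (q.2 i0 : ℝ) ≤ x i0 := hxq.1
  nlinarith

lemma dSet_eq_of_gen_eq (hl₀ : 0 < l₀) {p q : ℤ × (Fin d → ℤ)} (hgen : p.1 = q.1)
    (h : (dSet d a₀ l₀ p ∩ dSet d a₀ l₀ q).Nonempty) : p = q := by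
  obtain ⟨x, hxp, hxq⟩ := h
  have hspos : 0 < dSide l₀ p.1 := dSide_pos hl₀ p.1
  refine Prod.ext hgen (funext fun i => ?_)
  obtain ⟨h1, h2⟩ := hxp i
  obtain ⟨h3, h4⟩ := hxq i
  rw [← hgen] at h3 h4
  set s := dSide l₀ p.1
  have e1 : (p.2 i : ℝ) < (q.2 i : ℝ) + 1 := by
    have := lt_of_le_of_lt h1 h4
    nlinarith
  have e2 : (q.2 i : ℝ) < (p.2 i : ℝ) + 1 := by
    have := lt_of_le_of_lt h3 h2
    nlinarith
  have z1 : p.2 i < q.2 i + 1 := by exact_mod_cast e1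
  have z2 : q.2 i < p.2 i + 1 := by exact_mod_cast e2
  omega

lemma volume_dSet (hl₀ : 0 < l₀) (p : ℤ × (Fin d → ℤ)) :
    volume (dSet d a₀ l₀ p) = ENNReal.ofReal (dSide l₀ p.1) ^ d := by
  have hmp := EuclideanSpace.volume_preserving_symm_measurableEquiv_toLp (Fin d)
  have hset : dSet d a₀ l₀ p = (MeasurableEquiv.toLp 2 (Fin d → ℝ)).symm ⁻¹'
      (Set.univ.pi (fun i => Set.Ico (a₀ i + dSide l₀ p.1 * (p.2 i : ℝ))
        (a₀ i + dSide l₀ p.1 * ((p.2 i : ℝ) + 1)))) := by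
    ext y
    simp [dSet, Set.mem_pi, Set.mem_Ico, MeasurableEquiv.toLp]
    exact Iff.rfl
  rw [hset, hmp.measure_preimage]
  · rw [volume_pi_pi]
    have : ∀ i : Fin d, volume (Set.Ico (a₀ i + dSide l₀ p.1 * (p.2 i : ℝ))
        (a₀ i + dSide l₀ p.1 * ((p.2 i : ℝ) + 1))) = ENNReal.ofReal (dSide l₀ p.1) := by
      intro i
      rw [Real.volume_Ico]
      congr 1
      ring
    simp [this]
  · exact (MeasurableSet.univ_pi (fun i => measurableSet_Ico)).nullMeasurableSet

end PackingAux2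
section PackingAux3

variable {d : ℕ} {β : ℝ} {a₀ : Fin d → ℝ} {l₀ : ℝ}

lemma tsum_set_mono {ι : Type*} (f : ι → ℝ≥0∞) {s t : Set ι} (h : s ⊆ t) :
    ∑' x : s, f x ≤ ∑' x : t, f x := by
  rw [tsum_subtype, tsum_subtype]
  exact ENNReal.tsum_le_tsum
    (fun x => Set.indicator_le_indicator_of_subset h (fun _ => zero_le) x)

lemma tsum_subtype_le_total {ι : Type*} (f : ι → ℝ≥0∞) (s : Set ι) :
    ∑' x : s, f x ≤ ∑' x : ι, f x := by
  rw [tsum_subtype]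
  exact ENNReal.tsum_le_tsum (fun x => Set.indicator_le_self _ _ x)

lemma countable_of_disjoint (hl₀ : 0 < l₀) (I : Set (ℤ × (Fin d → ℤ)))
    (hI : ∀ p ∈ I, ∀ q ∈ I, p ≠ q → Disjoint (dSet d a₀ l₀ p) (dSet d a₀ l₀ q)) :
    I.Countable := by
  have hrat : ∀ p : ℤ × (Fin d → ℤ), ∃ r : Fin d → ℚ,
      toRd d (fun i => (r i : ℝ)) ∈ dSet d a₀ l₀ p := by
    intro p
    have hs := dSide_pos (l₀ := l₀) hl₀ p.1
    have hex : ∀ i : Fin d, ∃ ri : ℚ, a₀ i + dSide l₀ p.1 * (p.2 i : ℝ) < (ri : ℝ) ∧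
        (ri : ℝ) < a₀ i + dSide l₀ p.1 * ((p.2 i : ℝ) + 1) := by
      intro i
      apply exists_rat_btwn
      nlinarith
    choose r hr using hex
    exact ⟨r, fun i => ⟨(hr i).1.le, (hr i).2⟩⟩
  choose F hF using hrat
  rw [Set.countable_iff_exists_injOn]
  refine ⟨fun p => Encodable.encode (F p), fun p hp q hq hpq => ?_⟩
  have hFeq : F p = F q := Encodable.encode_injective hpq
  by_contra hne
  have hdisj := hI p hp q hq hne
  have hmem : toRd d (fun i => ((F p i : ℝ))) ∈ dSet d a₀ l₀ p ∩ dSet d a₀ l₀ q := by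
    refine ⟨hF p, ?_⟩
    rw [hFeq]
    exact hF q
  exact (Set.not_disjoint_iff.2 ⟨_, hmem.1, hmem.2⟩) hdisj

lemma cover_lower (hβ : 0 < β) (hβd : β ≤ d) (hl₀ : 0 < l₀) {q : ℤ × (Fin d → ℤ)}
    {ι : Type*} [Countable ι] (P : ι → ℤ × (Fin d → ℤ))
    (hcov : dSet d a₀ l₀ q ⊆ ⋃ i, dSet d a₀ l₀ (P i))
    (hsmall : ∀ i, dSide l₀ (P i).1 ≤ dSide l₀ q.1) :
    ENNReal.ofReal (dSide l₀ q.1 ^ β) ≤ ∑' i, ENNReal.ofReal (dSide l₀ (P i).1 ^ β) := by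
  set s := dSide l₀ q.1 with hs
  have hspos : 0 < s := dSide_pos hl₀ q.1
  have hvol : ENNReal.ofReal (s ^ ((d : ℝ))) ≤
      ∑' i, ENNReal.ofReal (dSide l₀ (P i).1 ^ ((d : ℝ))) := by
    have h1 : volume (dSet d a₀ l₀ q) ≤ ∑' i, volume (dSet d a₀ l₀ (P i)) :=
      le_trans (measure_mono hcov) (measure_iUnion_le _)
    rw [volume_dSet hl₀ q] at h1
    have h2 : ∀ i, volume (dSet d a₀ l₀ (P i)) =
        ENNReal.ofReal (dSide l₀ (P i).1 ^ ((d:ℝ))) := by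
      intro i
      rw [volume_dSet hl₀ (P i), ← ENNReal.ofReal_pow (dSide_pos hl₀ (P i).1).le,
        Real.rpow_natCast]
    calc ENNReal.ofReal (s ^ ((d:ℝ))) = ENNReal.ofReal s ^ d := by
          rw [← ENNReal.ofReal_pow hspos.le, Real.rpow_natCast]
      _ ≤ ∑' i, volume (dSet d a₀ l₀ (P i)) := h1
      _ = ∑' i, ENNReal.ofReal (dSide l₀ (P i).1 ^ ((d:ℝ))) := by
          exact tsum_congr h2
  have key : ∀ i, ENNReal.ofReal (s ^ (β - (d:ℝ))) *
      ENNReal.ofReal (dSide l₀ (P i).1 ^ ((d:ℝ))) ≤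
      ENNReal.ofReal (dSide l₀ (P i).1 ^ β) := by
    intro i
    set si := dSide l₀ (P i).1 with hsi
    have hsip : 0 < si := dSide_pos hl₀ (P i).1
    rw [← ENNReal.ofReal_mul (Real.rpow_nonneg hspos.le _)]
    apply ENNReal.ofReal_le_ofReal
    have e1 : si ^ β = si ^ (β - (d:ℝ)) * si ^ ((d:ℝ)) := by
      rw [← Real.rpow_add hsip]
      ring_nf
    rw [e1]
    have e2 : s ^ (β - (d:ℝ)) ≤ si ^ (β - (d:ℝ)) :=
      Real.rpow_le_rpow_of_nonpos hsip (hsmall i) (by linarith)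
    have : (0:ℝ) ≤ si ^ ((d:ℝ)) := Real.rpow_nonneg hsip.le _
    nlinarith
  calc ENNReal.ofReal (s ^ β)
      = ENNReal.ofReal (s ^ (β - (d:ℝ)) * s ^ ((d:ℝ))) := by
        rw [← Real.rpow_add hspos]; ring_nf
    _ = ENNReal.ofReal (s ^ (β - (d:ℝ))) * ENNReal.ofReal (s ^ ((d:ℝ))) :=
        ENNReal.ofReal_mul (Real.rpow_nonneg hspos.le _)
    _ ≤ ENNReal.ofReal (s ^ (β - (d:ℝ))) *
        ∑' i, ENNReal.ofReal (dSide l₀ (P i).1 ^ ((d:ℝ))) :=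
        mul_le_mul_right hvol _
    _ = ∑' i, ENNReal.ofReal (s ^ (β - (d:ℝ))) *
        ENNReal.ofReal (dSide l₀ (P i).1 ^ ((d:ℝ))) := ENNReal.tsum_mul_left.symm
    _ ≤ ∑' i, ENNReal.ofReal (dSide l₀ (P i).1 ^ β) := ENNReal.tsum_le_tsum key

end PackingAux3
section PackingAux4

variable {d : ℕ} {β : ℝ} {a₀ : Fin d → ℝ} {l₀ : ℝ}

lemma pad_small (hβ : 0 < β) (hl₀ : 0 < l₀) {ε : ℝ≥0∞} (hε : 0 < ε) :
    ∃ pd : ℕ → ℤ × (Fin d → ℤ),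
      ∑' n, ENNReal.ofReal (dSide l₀ (pd n).1 ^ β) ≤ ε := by
  set r : ℝ := (2⁻¹ : ℝ) ^ β with hr
  have hr0 : 0 ≤ r := Real.rpow_nonneg (by norm_num) _
  have hr1 : r < 1 := Real.rpow_lt_one (by norm_num) (by norm_num) hβ
  set xr : ℝ≥0∞ := ENNReal.ofReal r with hxr
  have hxr1 : xr < 1 := by
    rw [hxr, ← ENNReal.ofReal_one]
    exact ENNReal.ofReal_lt_ofReal_iff_of_nonneg hr0 |>.2 hr1
  set K : ℝ≥0∞ := ENNReal.ofReal (l₀ ^ β) * (1 - xr)⁻¹ with hK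
  have hKtop : K ≠ ∞ := by
    rw [hK]
    apply ENNReal.mul_ne_top ENNReal.ofReal_ne_top
    rw [Ne, ENNReal.inv_eq_top, tsub_eq_zero_iff_le]
    exact fun h => absurd (lt_of_lt_of_le hxr1 h) (lt_irrefl _)
  have hδpos : 0 < ε / K := ENNReal.div_pos hε.ne' hKtop
  obtain ⟨N, hN⟩ : ∃ N : ℕ, xr ^ N ≤ ε / K := by
    have := ENNReal.tendsto_pow_atTop_nhds_zero_of_lt_one hxr1
    have hev := this.eventually_le_const hδpos
    exact hev.exists
  refine ⟨fun n => (-(n + N : ℕ), fun _ => 0), ?_⟩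
  have hterm : ∀ n : ℕ, ENNReal.ofReal (dSide l₀ (-(n + N : ℕ) : ℤ) ^ β) =
      ENNReal.ofReal (l₀ ^ β) * xr ^ (n + N) := by
    intro n
    have h2 : dSide l₀ (-(n + N : ℕ) : ℤ) = l₀ * (2⁻¹ : ℝ) ^ ((n + N : ℕ)) := by
      rw [dSide, zpow_neg, ← inv_zpow, zpow_natCast]
    rw [h2, Real.mul_rpow hl₀.le (by positivity), ← Real.rpow_natCast ((2⁻¹:ℝ)) (n+N),
      ← Real.rpow_mul (by norm_num), mul_comm ((n+N : ℕ):ℝ) β,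
      Real.rpow_mul (by norm_num :(0:ℝ) ≤ 2⁻¹), Real.rpow_natCast, ← hr,
      ENNReal.ofReal_mul (by positivity), ENNReal.ofReal_pow hr0, hxr]
  calc ∑' n : ℕ, ENNReal.ofReal (dSide l₀ ((fun n => ((-(n + N : ℕ) : ℤ),
        fun _ : Fin d => (0:ℤ))) n).1 ^ β)
      = ∑' n : ℕ, ENNReal.ofReal (l₀ ^ β) * xr ^ (n + N) := by
        exact tsum_congr (fun n => hterm n)
    _ = ENNReal.ofReal (l₀ ^ β) * xr ^ N * ∑' n : ℕ, xr ^ n := by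
        rw [← ENNReal.tsum_mul_left]
        congr 1
        funext n
        rw [pow_add]
        ring
    _ = K * xr ^ N := by
        rw [ENNReal.tsum_geometric, hK]
        ring
    _ ≤ K * (ε / K) := mul_le_mul_right hN _
    _ ≤ ε := ENNReal.mul_div_le
end PackingAux4
section PackingAux5

variable {d : ℕ} {β : ℝ} {a₀ : Fin d → ℝ} {l₀ : ℝ}

lemma dContent_le_of_cover (hβ : 0 < β) (hl₀ : 0 < l₀) (C : Set (ℤ × (Fin d → ℤ)))
    (hC : C.Countable) (E : Set (Rd d)) (hcov : E ⊆ ⋃ p ∈ C, dSet d a₀ l₀ p) :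
    dContent d β a₀ l₀ E ≤ ∑' p : C, ENNReal.ofReal (dSide l₀ p.1.1 ^ β) := by
  set X := ∑' p : C, ENNReal.ofReal (dSide l₀ p.1.1 ^ β) with hX
  apply ENNReal.le_of_forall_pos_le_add
  intro ε hε _
  obtain ⟨pd, hpd⟩ := pad_small (d := d) hβ hl₀
    (ε := (ε : ℝ≥0∞)) (by exact_mod_cast hε)
  haveI : Countable ↥C := hC.to_subtype
  haveI : Encodable ↥C := Encodable.ofCountable _
  classical
  set c : ℕ → ℤ × (Fin d → ℤ) := fun n =>
    match Encodable.decode₂ ↥C n with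
    | some x => (x : ℤ × (Fin d → ℤ))
    | none => pd n with hc
  have hcval : ∀ (x : ↥C), c (Encodable.encode x) = (x : ℤ × (Fin d → ℤ)) := by
    intro x
    have : Encodable.decode₂ ↥C (Encodable.encode x) = some x :=
      Encodable.mem_decode₂.2 rfl
    simp [hc, this]
  have hcovc : E ⊆ ⋃ i, dSet d a₀ l₀ (c i) := by
    intro x hx
    obtain ⟨p, hp, hxp⟩ := Set.mem_iUnion₂.1 (hcov hx)
    refine Set.mem_iUnion.2 ⟨Encodable.encode (⟨p, hp⟩ : ↥C), ?_⟩
    rw [hcval ⟨p, hp⟩]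
    exact hxp
  have h1 : dContent d β a₀ l₀ E ≤ ∑' i, ENNReal.ofReal (dSide l₀ (c i).1 ^ β) := by
    rw [dContent]
    exact iInf_le_of_le c (iInf_le _ hcovc)
  set D : Set ℕ := Set.range (fun x : ↥C => Encodable.encode x) with hD
  have hsplit : ∑' i, ENNReal.ofReal (dSide l₀ (c i).1 ^ β) =
      (∑' i : D, ENNReal.ofReal (dSide l₀ (c i).1 ^ β)) +
      ∑' i : ↥Dᶜ, ENNReal.ofReal (dSide l₀ (c i).1 ^ β) :=
    (Summable.tsum_add_tsum_compl ENNReal.summable ENNReal.summable).symm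
  have hpart1 : ∑' i : D, ENNReal.ofReal (dSide l₀ (c i).1 ^ β) = X := by
    rw [hX]
    have hinj : Function.Injective (fun x : ↥C => Encodable.encode x) :=
      fun a b hab => Encodable.encode_injective hab
    rw [hD, tsum_range (fun n : ℕ => ENNReal.ofReal (dSide l₀ (c n).1 ^ β)) hinj]
    exact tsum_congr (fun x => by rw [hcval x])
  have hpart2 : ∑' i : ↥Dᶜ, ENNReal.ofReal (dSide l₀ (c i).1 ^ β) ≤ ε := by
    have hcn : ∀ i : ↥Dᶜ, c i = pd i := by
      intro ⟨n, hn⟩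
      have hnone : Encodable.decode₂ ↥C n = none := by
        by_contra hsome
        obtain ⟨x, hx⟩ := Option.ne_none_iff_exists'.1 hsome
        exact hn ⟨x, Encodable.mem_decode₂.1 hx⟩
      simp [hc, hnone]
    calc ∑' i : ↥Dᶜ, ENNReal.ofReal (dSide l₀ (c i).1 ^ β)
        = ∑' i : ↥Dᶜ, ENNReal.ofReal (dSide l₀ (pd i).1 ^ β) := by
          exact tsum_congr (fun i => by rw [hcn i])
      _ ≤ ∑' n : ℕ, ENNReal.ofReal (dSide l₀ (pd n).1 ^ β) :=
          tsum_subtype_le_total _ _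
      _ ≤ ε := hpd
  calc dContent d β a₀ l₀ E ≤ ∑' i, ENNReal.ofReal (dSide l₀ (c i).1 ^ β) := h1
    _ = (∑' i : D, ENNReal.ofReal (dSide l₀ (c i).1 ^ β)) +
        ∑' i : ↥Dᶜ, ENNReal.ofReal (dSide l₀ (c i).1 ^ β) := hsplit
    _ ≤ X + ε := add_le_add hpart1.le hpart2

end PackingAux5
section PackingAux6

variable {d : ℕ} {β : ℝ} {a₀ : Fin d → ℝ} {l₀ : ℝ}

/-- finitary packing property -/
def packs (d : ℕ) (β : ℝ) (a₀ : Fin d → ℝ) (l₀ : ℝ) (T : Set (ℤ × (Fin d → ℤ))) : Prop :=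
  ∀ (Q : ℤ × (Fin d → ℤ)) (F : Finset (ℤ × (Fin d → ℤ))),
    (↑F : Set (ℤ × (Fin d → ℤ))) ⊆ {p | p ∈ T ∧ dSet d a₀ l₀ p ⊆ dSet d a₀ l₀ Q} →
    (∑ p ∈ F, ENNReal.ofReal (dSide l₀ p.1 ^ β)) ≤ ENNReal.ofReal (2 * dSide l₀ Q.1 ^ β)

lemma packs_tsum {T : Set (ℤ × (Fin d → ℤ))} (hT : packs d β a₀ l₀ T)
    (Q : ℤ × (Fin d → ℤ)) :
    ∑' p : {p | p ∈ T ∧ dSet d a₀ l₀ p ⊆ dSet d a₀ l₀ Q},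
      ENNReal.ofReal (dSide l₀ (p : ℤ × (Fin d → ℤ)).1 ^ β) ≤
      ENNReal.ofReal (2 * dSide l₀ Q.1 ^ β) := by
  rw [tsum_subtype {p | p ∈ T ∧ dSet d a₀ l₀ p ⊆ dSet d a₀ l₀ Q}
    (fun q => ENNReal.ofReal (dSide l₀ q.1 ^ β)), ENNReal.tsum_eq_iSup_sum]
  apply iSup_le
  intro F
  classical
  rw [Finset.sum_indicator_eq_sum_filter]
  apply hT Q
  intro p hp
  simp only [Finset.coe_filter, Set.mem_setOf_eq] at hp
  exact hp.2

lemma packs_empty : packs d β a₀ l₀ ∅ := by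
  intro Q F hF
  have : F = ∅ := by
    rcases Finset.eq_empty_or_nonempty F with h | h
    · exact h
    · obtain ⟨p, hp⟩ := h
      exact absurd (hF hp).1 (Set.notMem_empty p)
  rw [this]
  simp

lemma exists_maximal_packs (S : Set (ℤ × (Fin d → ℤ))) :
    ∃ T, (T ⊆ S ∧ packs d β a₀ l₀ T) ∧
      ∀ T', T' ⊆ S → packs d β a₀ l₀ T' → T ⊆ T' → T' = T := by
  have hz := zorn_subset {T | T ⊆ S ∧ packs d β a₀ l₀ T} ?_
  case _ =>
    obtain ⟨T, hT⟩ := hz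
    refine ⟨T, hT.prop, fun T' hT'S hT'p hTT' => ?_⟩
    exact subset_antisymm (hT.2 ⟨hT'S, hT'p⟩ hTT') hTT'
  case _ =>
    intro c hc hchain
    refine ⟨⋃₀ c, ⟨Set.sUnion_subset fun t ht => (hc ht).1, ?_⟩,
      fun s hs => Set.subset_sUnion_of_mem hs⟩
    intro Q F hF
    have key : ∀ F : Finset (ℤ × (Fin d → ℤ)), (↑F : Set _) ⊆ ⋃₀ c →
        F = ∅ ∨ ∃ t ∈ c, (↑F : Set _) ⊆ t := by
      intro F
      classical
      induction F using Finset.induction_on with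
      | empty => intro _; exact Or.inl rfl
      | insert a F hnot ih =>
        intro hsub
        have haU : a ∈ ⋃₀ c := hsub (Finset.mem_coe.2 (Finset.mem_insert_self a F))
        obtain ⟨ta, htac, hata⟩ := haU
        rcases ih (fun p hp => hsub (Finset.mem_coe.2 (Finset.mem_insert_of_mem hp))) with
          hemp | ⟨t, htc, hFt⟩
        · subst hemp
          refine Or.inr ⟨ta, htac, ?_⟩
          intro p hp
          simp only [Finset.coe_insert, Set.mem_insert_iff, Finset.coe_empty] at hp
          rcases hp with rfl | hp
          · exact hata
          · simp at hp
        · rcases hchain.total htac htc with hle | hle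
          · refine Or.inr ⟨t, htc, ?_⟩
            intro p hp
            simp only [Finset.coe_insert, Set.mem_insert_iff] at hp
            rcases hp with rfl | hp
            · exact hle hata
            · exact hFt hp
          · refine Or.inr ⟨ta, htac, ?_⟩
            intro p hp
            simp only [Finset.coe_insert, Set.mem_insert_iff] at hp
            rcases hp with rfl | hp
            · exact hata
            · exact hle (hFt hp)
    rcases key F (fun p hp => (hF hp).1) with rfl | ⟨t, htc, hFt⟩
    · simp
    · exact (hc htc).2 Q F (fun p hp => ⟨hFt hp, (hF hp).2⟩)

end PackingAux6
section PackingAux7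

variable {d : ℕ} {β : ℝ} {a₀ : Fin d → ℝ} {l₀ : ℝ}

lemma witness_of_not_selected (hd : 0 < d) (hβ : 0 < β) (hl₀ : 0 < l₀)
    {S T : Set (ℤ × (Fin d → ℤ))} (hTS : T ⊆ S) (hTp : packs d β a₀ l₀ T)
    (hmax : ∀ T', T' ⊆ S → packs d β a₀ l₀ T' → T ⊆ T' → T' = T)
    {p : ℤ × (Fin d → ℤ)} (hpS : p ∈ S) (hpT : p ∉ T) :
    ∃ Q, dSet d a₀ l₀ p ⊆ dSet d a₀ l₀ Q ∧
      ENNReal.ofReal (dSide l₀ Q.1 ^ β) ≤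
        ∑' q : {q | q ∈ T ∧ dSet d a₀ l₀ q ⊆ dSet d a₀ l₀ Q},
          ENNReal.ofReal (dSide l₀ (q : ℤ × (Fin d → ℤ)).1 ^ β) := by
  classical
  have hins : ¬ packs d β a₀ l₀ (insert p T) := by
    intro hp'
    have := hmax (insert p T) (Set.insert_subset hpS hTS) hp' (Set.subset_insert p T)
    rw [← this] at hpT
    exact hpT (Set.mem_insert p T)
  rw [packs] at hins
  push_neg at hins
  obtain ⟨Q, F, hF, hlt⟩ := hins
  have hpF : p ∈ F := by
    by_contra hpF
    refine absurd (hTp Q F ?_) (not_le.2 hlt)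
    intro q hq
    have h1 := hF hq
    have hqT : q ∈ T := by
      rcases h1.1 with rfl | h
      · exact absurd hq hpF
      · exact h
    exact ⟨hqT, h1.2⟩
  have hsub : dSet d a₀ l₀ p ⊆ dSet d a₀ l₀ Q := (hF hpF).2
  refine ⟨Q, hsub, ?_⟩
  set x : (ℤ × (Fin d → ℤ)) → ℝ := fun q => dSide l₀ q.1 ^ β with hxdef
  have hx0 : ∀ q, 0 ≤ x q := fun q => Real.rpow_nonneg (dSide_pos hl₀ q.1).le β
  have hEF : ∀ G : Finset (ℤ × (Fin d → ℤ)),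
      (∑ q ∈ G, ENNReal.ofReal (x q)) = ENNReal.ofReal (∑ q ∈ G, x q) :=
    fun G => (ENNReal.ofReal_sum_of_nonneg (fun q _ => hx0 q)).symm
  rw [hEF] at hlt
  have hreal : 2 * dSide l₀ Q.1 ^ β < ∑ q ∈ F, x q := by
    have h2 : (0:ℝ) ≤ 2 * dSide l₀ Q.1 ^ β := by
      have := Real.rpow_nonneg (dSide_pos hl₀ Q.1).le β
      linarith
    exact (ENNReal.ofReal_lt_ofReal_iff_of_nonneg h2).1 hlt
  have hxp : x p ≤ dSide l₀ Q.1 ^ β :=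
    Real.rpow_le_rpow (dSide_pos hl₀ p.1).le (dSide_le_of_subset hd hl₀ hsub) hβ.le
  have herase : dSide l₀ Q.1 ^ β ≤ ∑ q ∈ F.erase p, x q := by
    have := Finset.sum_erase_add F x hpF
    linarith
  calc ENNReal.ofReal (dSide l₀ Q.1 ^ β)
      ≤ ENNReal.ofReal (∑ q ∈ F.erase p, x q) := ENNReal.ofReal_le_ofReal herase
    _ = ∑ q ∈ F.erase p, ENNReal.ofReal (x q) := (hEF _).symm
    _ = ∑' q : ↥(↑(F.erase p) : Set (ℤ × (Fin d → ℤ))),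
        ENNReal.ofReal (x (q : ℤ × (Fin d → ℤ))) := (Finset.tsum_subtype' _ _).symm
    _ ≤ ∑' q : {q | q ∈ T ∧ dSet d a₀ l₀ q ⊆ dSet d a₀ l₀ Q},
        ENNReal.ofReal (x (q : ℤ × (Fin d → ℤ))) := by
        apply tsum_set_mono (fun q => ENNReal.ofReal (x q))
        intro q hq
        rw [Finset.mem_coe, Finset.mem_erase] at hq
        have h1 := hF hq.2
        have hqT : q ∈ T := by
          rcases h1.1 with rfl | h
          · exact absurd rfl hq.1
          · exact h
        exact ⟨hqT, h1.2⟩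

end PackingAux7
section PackingAux8

variable {d : ℕ} {β : ℝ} {a₀ : Fin d → ℝ} {l₀ : ℝ}

lemma gen_le_of_side_le (hl₀ : 0 < l₀) {k k' : ℤ} (h : dSide l₀ k ≤ dSide l₀ k') :
    k ≤ k' := by
  by_contra hc
  push_neg at hc
  have h1 : dSide l₀ k' < dSide l₀ k :=
    mul_lt_mul_of_pos_left (zpow_lt_zpow_right₀ one_lt_two hc) hl₀
  linarith

lemma dSet_index_inj (hd : 0 < d) (hl₀ : 0 < l₀) {p q : ℤ × (Fin d → ℤ)}
    (h : dSet d a₀ l₀ p = dSet d a₀ l₀ q) : p = q := by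
  have h1 : dSide l₀ p.1 ≤ dSide l₀ q.1 := dSide_le_of_subset hd hl₀ h.le
  have h2 : dSide l₀ q.1 ≤ dSide l₀ p.1 := dSide_le_of_subset hd hl₀ h.ge
  have hk : p.1 = q.1 := le_antisymm (gen_le_of_side_le hl₀ h1) (gen_le_of_side_le hl₀ h2)
  apply dSet_eq_of_gen_eq hl₀ hk
  obtain ⟨x, hx⟩ := dSet_nonempty (a₀ := a₀) hl₀ p
  exact ⟨x, hx, h ▸ hx⟩

lemma gen_bound (hβ : 0 < β) (hl₀ : 0 < l₀) {A : ℝ≥0∞} (hA : A ≠ ∞) :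
    ∃ K : ℤ, ∀ k : ℤ, ENNReal.ofReal (dSide l₀ k ^ β) ≤ A → k ≤ K := by
  have h2β : (1:ℝ) < 2 ^ β := by
    rw [show (2:ℝ) ^ β = (2:ℝ) ^ β from rfl]
    have := Real.rpow_lt_rpow_of_exponent_lt (x := 2) one_lt_two (by linarith : (0:ℝ) < β)
    calc (1:ℝ) = 2 ^ (0:ℝ) := (Real.rpow_zero 2).symm
      _ < 2 ^ β := Real.rpow_lt_rpow_of_exponent_lt one_lt_two hβ
  have htend := tendsto_pow_atTop_atTop_of_one_lt h2β
  obtain ⟨n₀, hn₀⟩ := (htend.eventually_gt_atTop (A.toReal / l₀ ^ β)).exists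
  have hl₀β : (0:ℝ) < l₀ ^ β := Real.rpow_pos_of_pos hl₀ β
  have hbig : A.toReal < dSide l₀ (n₀ : ℤ) ^ β := by
    have hside : dSide l₀ (n₀ : ℤ) = l₀ * 2 ^ n₀ := by
      rw [dSide, zpow_natCast]
    rw [hside, Real.mul_rpow hl₀.le (by positivity),
      ← Real.rpow_natCast (2:ℝ) n₀, ← Real.rpow_mul (by norm_num), mul_comm (n₀:ℝ) β,
      Real.rpow_mul (by norm_num : (0:ℝ) ≤ 2), Real.rpow_natCast]
    calc A.toReal = l₀ ^ β * (A.toReal / l₀ ^ β) := by field_simp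
      _ < l₀ ^ β * ((2:ℝ) ^ β) ^ n₀ := by
        exact mul_lt_mul_of_pos_left hn₀ hl₀β
  refine ⟨(n₀ : ℤ), fun k hk => ?_⟩
  by_contra hc
  push_neg at hc
  have h1 : dSide l₀ (n₀ : ℤ) ≤ dSide l₀ k := dSide_mono hl₀ hc.le
  have h2 : dSide l₀ (n₀ : ℤ) ^ β ≤ dSide l₀ k ^ β :=
    Real.rpow_le_rpow (dSide_pos hl₀ _).le h1 hβ.le
  have h3 : dSide l₀ k ^ β ≤ A.toReal := by
    rw [← ENNReal.ofReal_le_iff_le_toReal hA] at *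
    · exact hk
  linarith

end PackingAux8
section PackingAux9

variable {d : ℕ} {β : ℝ} {a₀ : Fin d → ℝ} {l₀ : ℝ}

lemma content_le_selected (hd : 0 < d) (hβ : 0 < β) (hl₀ : 0 < l₀)
    {S T : Set (ℤ × (Fin d → ℤ))}
    (hS : ∀ p ∈ S, ∀ q ∈ S, p ≠ q → Disjoint (dSet d a₀ l₀ p) (dSet d a₀ l₀ q))
    (hTS : T ⊆ S) (hTp : packs d β a₀ l₀ T)
    (hmax : ∀ T', T' ⊆ S → packs d β a₀ l₀ T' → T ⊆ T' → T' = T) :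
    dContent d β a₀ l₀ (⋃ p ∈ S, dSet d a₀ l₀ p) ≤
      ∑' p : T, ENNReal.ofReal (dSide l₀ (p : ℤ × (Fin d → ℤ)).1 ^ β) := by
  classical
  by_cases hA : ∑' p : T, ENNReal.ofReal (dSide l₀ (p : ℤ × (Fin d → ℤ)).1 ^ β) = ∞
  · rw [hA]; exact le_top
  set W : Set (ℤ × (Fin d → ℤ)) := {w | ENNReal.ofReal (dSide l₀ w.1 ^ β) ≤
    ∑' q : {q | q ∈ T ∧ dSet d a₀ l₀ q ⊆ dSet d a₀ l₀ w},
      ENNReal.ofReal (dSide l₀ (q : ℤ × (Fin d → ℤ)).1 ^ β)} with hW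
  have hWA : ∀ w ∈ W, ENNReal.ofReal (dSide l₀ w.1 ^ β) ≤
      ∑' p : T, ENNReal.ofReal (dSide l₀ (p : ℤ × (Fin d → ℤ)).1 ^ β) := by
    intro w hw
    exact le_trans hw (tsum_set_mono
      (fun r : ℤ × (Fin d → ℤ) => ENNReal.ofReal (dSide l₀ r.1 ^ β))
      (fun q hq => hq.1))
  obtain ⟨K, hK⟩ := gen_bound (l₀ := l₀) hβ hl₀ hA
  -- choose maximal witness cubes
  have hch : ∀ p : ↥(S \ T), ∃ w, w ∈ W ∧
      dSet d a₀ l₀ (p : ℤ × (Fin d → ℤ)) ⊆ dSet d a₀ l₀ w ∧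
      ∀ w' ∈ W, dSet d a₀ l₀ (p : ℤ × (Fin d → ℤ)) ⊆ dSet d a₀ l₀ w' →
        dSet d a₀ l₀ w' ⊆ dSet d a₀ l₀ w := by
    rintro ⟨p, hpS, hpT⟩
    obtain ⟨Q, hQsub, hQsum⟩ := witness_of_not_selected hd hβ hl₀ hTS hTp hmax hpS hpT
    set Ap : Set (ℤ × (Fin d → ℤ)) := {w | w ∈ W ∧ dSet d a₀ l₀ p ⊆ dSet d a₀ l₀ w}
      with hAp
    have hpint : ∀ w1 w2 : ℤ × (Fin d → ℤ), w1 ∈ Ap → w2 ∈ Ap →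
        (dSet d a₀ l₀ w1 ∩ dSet d a₀ l₀ w2).Nonempty := by
      intro w1 w2 h1 h2
      obtain ⟨x, hx⟩ := dSet_nonempty (a₀ := a₀) hl₀ p
      exact ⟨x, h1.2 hx, h2.2 hx⟩
    have hfin : Ap.Finite := by
      apply Set.Finite.of_finite_image (f := fun w : ℤ × (Fin d → ℤ) => w.1)
      · apply Set.Finite.subset (Set.finite_Icc p.1 K)
        rintro k ⟨w, hwAp, rfl⟩
        constructor
        · exact gen_le_of_side_le hl₀ (dSide_le_of_subset hd hl₀ hwAp.2)
        · exact hK w.1 (hWA w hwAp.1)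
      · intro w1 h1 w2 h2 h12
        exact dSet_eq_of_gen_eq hl₀ h12 (hpint w1 w2 h1 h2)
    obtain ⟨w, hwAp, hwmax⟩ := Set.Finite.exists_maximalFor
      (fun w : ℤ × (Fin d → ℤ) => w.1) Ap hfin ⟨Q, hQsum, hQsub⟩
    refine ⟨w, hwAp.1, hwAp.2, ?_⟩
    intro w' hw'W hw'sub
    have hint : (dSet d a₀ l₀ w' ∩ dSet d a₀ l₀ w).Nonempty :=
      hpint w' w ⟨hw'W, hw'sub⟩ hwAp
    rcases dSet_dichotomy hl₀ w' w hint with h | h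
    · exact h
    · have hgen : w.1 ≤ w'.1 :=
        gen_le_of_side_le hl₀ (dSide_le_of_subset hd hl₀ h)
      have heq : w.1 = w'.1 := le_antisymm hgen (hwmax ⟨hw'W, hw'sub⟩ hgen)
      have : w = w' := dSet_eq_of_gen_eq hl₀ heq
        ⟨hint.choose, hint.choose_spec.2, hint.choose_spec.1⟩
      rw [this]
  choose wit hwit using hch
  set Ws : Set (ℤ × (Fin d → ℤ)) := Set.range wit with hWs
  have hWdisj : ∀ y₁ ∈ Ws, ∀ y₂ ∈ Ws, y₁ ≠ y₂ →
      Disjoint (dSet d a₀ l₀ y₁) (dSet d a₀ l₀ y₂) := by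
    rintro y₁ ⟨p₁, rfl⟩ y₂ ⟨p₂, rfl⟩ hne
    by_contra hnd
    have hint := Set.not_disjoint_iff_nonempty_inter.1 hnd
    have hcontr : wit p₁ = wit p₂ := by
      rcases dSet_dichotomy hl₀ (wit p₁) (wit p₂) hint with h | h
      · have h2 := (hwit p₁).2.2 (wit p₂) (hwit p₂).1 ((hwit p₁).2.1.trans h)
        exact dSet_index_inj hd hl₀ (Set.Subset.antisymm h h2)
      · have h2 := (hwit p₂).2.2 (wit p₁) (hwit p₁).1 ((hwit p₂).2.1.trans h)
        exact (dSet_index_inj hd hl₀ (Set.Subset.antisymm h h2)).symm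
    exact hne hcontr
  have hScnt : S.Countable := countable_of_disjoint hl₀ S hS
  have hTcnt : T.Countable := hScnt.mono hTS
  have hWscnt : Ws.Countable := by
    haveI : Countable ↥(S \ T) := (hScnt.mono Set.diff_subset).to_subtype
    exact Set.countable_range wit
  set T0 : Set (ℤ × (Fin d → ℤ)) :=
    {q | q ∈ T ∧ ¬ ∃ y ∈ Ws, dSet d a₀ l₀ q ⊆ dSet d a₀ l₀ y} with hT0
  set T1 : Set (ℤ × (Fin d → ℤ)) :=
    {q | q ∈ T ∧ ∃ y ∈ Ws, dSet d a₀ l₀ q ⊆ dSet d a₀ l₀ y} with hT1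
  set C : Set (ℤ × (Fin d → ℤ)) := T0 ∪ Ws with hC
  have hCcnt : C.Countable := (hTcnt.mono (fun q hq => hq.1)).union hWscnt
  have hcov : (⋃ p ∈ S, dSet d a₀ l₀ p) ⊆ ⋃ r ∈ C, dSet d a₀ l₀ r := by
    intro x hx
    obtain ⟨p, hpS, hxp⟩ := Set.mem_iUnion₂.1 hx
    by_cases hpT : p ∈ T
    · by_cases hy : ∃ y ∈ Ws, dSet d a₀ l₀ p ⊆ dSet d a₀ l₀ y
      · obtain ⟨y, hyWs, hsub⟩ := hy
        exact Set.mem_iUnion₂.2 ⟨y, Or.inr hyWs, hsub hxp⟩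
      · exact Set.mem_iUnion₂.2 ⟨p, Or.inl ⟨hpT, hy⟩, hxp⟩
    · exact Set.mem_iUnion₂.2 ⟨wit ⟨p, hpS, hpT⟩, Or.inr ⟨⟨p, hpS, hpT⟩, rfl⟩,
        (hwit ⟨p, hpS, hpT⟩).2.1 hxp⟩
  have hsum : ∑' r : C, ENNReal.ofReal (dSide l₀ (r : ℤ × (Fin d → ℤ)).1 ^ β) ≤
      ∑' p : T, ENNReal.ofReal (dSide l₀ (p : ℤ × (Fin d → ℤ)).1 ^ β) := by
    have hdisj01 : Disjoint T0 Ws := by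
      rw [Set.disjoint_left]
      intro y hy0 hyW
      exact hy0.2 ⟨y, hyW, subset_rfl⟩
    have hCeq : ∑' r : C, ENNReal.ofReal (dSide l₀ (r : ℤ × (Fin d → ℤ)).1 ^ β) =
        (∑' r : T0, ENNReal.ofReal (dSide l₀ (r : ℤ × (Fin d → ℤ)).1 ^ β)) +
        ∑' r : Ws, ENNReal.ofReal (dSide l₀ (r : ℤ × (Fin d → ℤ)).1 ^ β) := by
      rw [hC]
      exact Summable.tsum_union_disjoint
        (f := fun r : ℤ × (Fin d → ℤ) => ENNReal.ofReal (dSide l₀ r.1 ^ β))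
        hdisj01 ENNReal.summable ENNReal.summable
    have hWsle : ∑' r : Ws, ENNReal.ofReal (dSide l₀ (r : ℤ × (Fin d → ℤ)).1 ^ β) ≤
        ∑' q : T1, ENNReal.ofReal (dSide l₀ (q : ℤ × (Fin d → ℤ)).1 ^ β) := by
      have step1 : ∑' r : Ws, ENNReal.ofReal (dSide l₀ (r : ℤ × (Fin d → ℤ)).1 ^ β) ≤
          ∑' r : Ws, ∑' q : {q | q ∈ T ∧ dSet d a₀ l₀ q ⊆
              dSet d a₀ l₀ (r : ℤ × (Fin d → ℤ))},
            ENNReal.ofReal (dSide l₀ (q : ℤ × (Fin d → ℤ)).1 ^ β) := by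
        apply ENNReal.tsum_le_tsum
        rintro ⟨r, hrWs⟩
        obtain ⟨p, hp⟩ := hrWs
        have := (hwit p).1
        rw [hp] at this
        exact this
      have step2 : ∑' r : Ws, ∑' q : {q | q ∈ T ∧ dSet d a₀ l₀ q ⊆
              dSet d a₀ l₀ (r : ℤ × (Fin d → ℤ))},
            ENNReal.ofReal (dSide l₀ (q : ℤ × (Fin d → ℤ)).1 ^ β) ≤
          ∑' q : T1, ENNReal.ofReal (dSide l₀ (q : ℤ × (Fin d → ℤ)).1 ^ β) := by
        rw [← ENNReal.tsum_sigma (fun (r : ↥Ws)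
          (q : ↥{q | q ∈ T ∧ dSet d a₀ l₀ q ⊆ dSet d a₀ l₀ (r : ℤ × (Fin d → ℤ))}) =>
            ENNReal.ofReal (dSide l₀ (q : ℤ × (Fin d → ℤ)).1 ^ β))]
        apply Summable.tsum_le_tsum_of_inj
          (fun x : (Σ r : ↥Ws, ↥{q | q ∈ T ∧ dSet d a₀ l₀ q ⊆
              dSet d a₀ l₀ (r : ℤ × (Fin d → ℤ))}) =>
            (⟨(x.2 : ℤ × (Fin d → ℤ)), x.2.2.1,
              ⟨(x.1 : ℤ × (Fin d → ℤ)), x.1.2, x.2.2.2⟩⟩ : ↥T1))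
        · rintro ⟨⟨r, hrWs⟩, ⟨q, hqT, hqsub⟩⟩ ⟨⟨r', hrWs'⟩, ⟨q', hqT', hqsub'⟩⟩ h
          have hqq : q = q' := congrArg Subtype.val h
          subst hqq
          have hrr : r = r' := by
            by_contra hne
            have hdisj := hWdisj r hrWs r' hrWs' hne
            obtain ⟨x, hx⟩ := dSet_nonempty (a₀ := a₀) hl₀ q
            exact Set.not_disjoint_iff.2 ⟨x, hqsub hx, hqsub' hx⟩ hdisj
          subst hrr
          rfl
        · exact fun c _ => zero_le
        · exact fun x => le_refl _
        · exact ENNReal.summable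
        · exact ENNReal.summable
      exact le_trans step1 step2
    have hT01 : Disjoint T0 T1 := by
      rw [Set.disjoint_left]
      intro q hq0 hq1
      exact hq0.2 hq1.2
    calc ∑' r : C, ENNReal.ofReal (dSide l₀ (r : ℤ × (Fin d → ℤ)).1 ^ β)
        = (∑' r : T0, ENNReal.ofReal (dSide l₀ (r : ℤ × (Fin d → ℤ)).1 ^ β)) +
          ∑' r : Ws, ENNReal.ofReal (dSide l₀ (r : ℤ × (Fin d → ℤ)).1 ^ β) := hCeq
      _ ≤ (∑' r : T0, ENNReal.ofReal (dSide l₀ (r : ℤ × (Fin d → ℤ)).1 ^ β)) +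
          ∑' q : T1, ENNReal.ofReal (dSide l₀ (q : ℤ × (Fin d → ℤ)).1 ^ β) :=
          add_le_add_right hWsle _
      _ = ∑' q : ↥(T0 ∪ T1), ENNReal.ofReal (dSide l₀ (q : ℤ × (Fin d → ℤ)).1 ^ β) :=
          (Summable.tsum_union_disjoint
            (f := fun r : ℤ × (Fin d → ℤ) => ENNReal.ofReal (dSide l₀ r.1 ^ β))
            hT01 ENNReal.summable ENNReal.summable).symm
      _ ≤ ∑' p : T, ENNReal.ofReal (dSide l₀ (p : ℤ × (Fin d → ℤ)).1 ^ β) := by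
          apply tsum_set_mono
            (fun r : ℤ × (Fin d → ℤ) => ENNReal.ofReal (dSide l₀ r.1 ^ β))
          rintro q (hq | hq) <;> exact hq.1
  exact le_trans (dContent_le_of_cover hβ hl₀ C hCcnt _ hcov) hsum

end PackingAux9
section PackingAux10

variable {d : ℕ} {β : ℝ} {a₀ : Fin d → ℝ} {l₀ : ℝ}

lemma selected_le_cover (hd : 0 < d) (hβ : 0 < β) (hβd : β ≤ d) (hl₀ : 0 < l₀)
    {S T : Set (ℤ × (Fin d → ℤ))}
    (hS : ∀ p ∈ S, ∀ q ∈ S, p ≠ q → Disjoint (dSet d a₀ l₀ p) (dSet d a₀ l₀ q))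
    (hTS : T ⊆ S) (hTp : packs d β a₀ l₀ T) (c : ℕ → ℤ × (Fin d → ℤ))
    (hcov : (⋃ p ∈ S, dSet d a₀ l₀ p) ⊆ ⋃ i, dSet d a₀ l₀ (c i)) :
    ∑' p : T, ENNReal.ofReal (dSide l₀ (p : ℤ × (Fin d → ℤ)).1 ^ β) ≤
      2 * ∑' i, ENNReal.ofReal (dSide l₀ (c i).1 ^ β) := by
  classical
  have hsubT : ∀ q ∈ T, dSet d a₀ l₀ q ⊆ ⋃ i, dSet d a₀ l₀ (c i) := by
    intro q hq
    exact le_trans (Set.subset_biUnion_of_mem (hTS hq)) hcov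
  set TA : Set (ℤ × (Fin d → ℤ)) :=
    {q | q ∈ T ∧ ∃ i, dSet d a₀ l₀ q ⊆ dSet d a₀ l₀ (c i)} with hTA
  set TB : Set (ℤ × (Fin d → ℤ)) :=
    {q | q ∈ T ∧ ¬ ∃ i, dSet d a₀ l₀ q ⊆ dSet d a₀ l₀ (c i)} with hTB
  have hTeq : T = TA ∪ TB := by
    ext q
    constructor
    · intro hq
      by_cases h : ∃ i, dSet d a₀ l₀ q ⊆ dSet d a₀ l₀ (c i)
      · exact Or.inl ⟨hq, h⟩
      · exact Or.inr ⟨hq, h⟩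
    · rintro (hq | hq) <;> exact hq.1
  have hABdisj : Disjoint TA TB := by
    rw [Set.disjoint_left]
    intro q hqa hqb
    exact hqb.2 hqa.2
  -- choice of covering cube for TA elements
  have hchA : ∀ q : ↥TA, ∃ i, dSet d a₀ l₀ (q : ℤ × (Fin d → ℤ)) ⊆ dSet d a₀ l₀ (c i) :=
    fun q => q.2.2
  choose σ hσ using hchA
  set IA : Set ℕ := Set.range σ with hIA
  set IB : Set ℕ :=
    {i | ∃ q ∈ TB, dSet d a₀ l₀ (c i) ⊆ dSet d a₀ l₀ q} with hIB
  have hIdisj : Disjoint IA IB := by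
    rw [Set.disjoint_left]
    rintro i ⟨q₀, rfl⟩ ⟨q₁, hq₁TB, hsub₁⟩
    have hsub : dSet d a₀ l₀ (q₀ : ℤ × (Fin d → ℤ)) ⊆ dSet d a₀ l₀ q₁ :=
      (hσ q₀).trans hsub₁
    have hne : (q₀ : ℤ × (Fin d → ℤ)) ≠ q₁ := by
      intro h
      have : (q₀ : ℤ × (Fin d → ℤ)) ∈ TB := h ▸ hq₁TB
      exact hABdisj.le_bot ⟨q₀.2, this⟩
    have hdisj := hS _ (hTS q₀.2.1) _ (hTS hq₁TB.1) hne
    obtain ⟨x, hx⟩ := dSet_nonempty (a₀ := a₀) hl₀ (q₀ : ℤ × (Fin d → ℤ))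
    exact Set.not_disjoint_iff.2 ⟨x, hx, hsub hx⟩ hdisj
  -- bound for the TA part
  have hAbound : ∑' q : TA, ENNReal.ofReal (dSide l₀ (q : ℤ × (Fin d → ℤ)).1 ^ β) ≤
      ∑' i : ℕ, Set.indicator IA (fun i => 2 * ENNReal.ofReal (dSide l₀ (c i).1 ^ β)) i := by
    have e1 : ∑' q : TA, ENNReal.ofReal (dSide l₀ (q : ℤ × (Fin d → ℤ)).1 ^ β) =
        ∑' i : ℕ, ∑' q : {q : ↥TA // σ q = i},
          ENNReal.ofReal (dSide l₀ (((q : ↥TA) : ℤ × (Fin d → ℤ))).1 ^ β) := by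
      rw [← ENNReal.tsum_sigma (fun (i : ℕ) (q : {q : ↥TA // σ q = i}) =>
        ENNReal.ofReal (dSide l₀ (((q : ↥TA) : ℤ × (Fin d → ℤ))).1 ^ β))]
      exact ((Equiv.sigmaFiberEquiv σ).tsum_eq
        (fun q : ↥TA => ENNReal.ofReal (dSide l₀ (q : ℤ × (Fin d → ℤ)).1 ^ β))).symm
    rw [e1]
    apply ENNReal.tsum_le_tsum
    intro i
    by_cases hi : i ∈ IA
    · rw [Set.indicator_of_mem hi]
      have hpack := packs_tsum hTp (c i)
      have hle : ∑' q : {q : ↥TA // σ q = i},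
          ENNReal.ofReal (dSide l₀ ((q : ↥TA) : ℤ × (Fin d → ℤ)).1 ^ β) ≤
          ∑' r : {r | r ∈ T ∧ dSet d a₀ l₀ r ⊆ dSet d a₀ l₀ (c i)},
            ENNReal.ofReal (dSide l₀ (r : ℤ × (Fin d → ℤ)).1 ^ β) := by
        apply Summable.tsum_le_tsum_of_inj
          (fun q : {q : ↥TA // σ q = i} =>
            (⟨((q : ↥TA) : ℤ × (Fin d → ℤ)), (q : ↥TA).2.1,
              (by exact (congrArg (fun j => dSet d a₀ l₀ (c j)) q.2) ▸ hσ (q : ↥TA))⟩ :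
              ↥{r | r ∈ T ∧ dSet d a₀ l₀ r ⊆ dSet d a₀ l₀ (c i)}))
        · rintro ⟨⟨q, hq⟩, hq2⟩ ⟨⟨q', hq'⟩, hq2'⟩ h
          have : q = q' := congrArg Subtype.val h
          subst this
          rfl
        · exact fun _ _ => zero_le
        · exact fun _ => le_refl _
        · exact ENNReal.summable
        · exact ENNReal.summable
      calc ∑' q : {q : ↥TA // σ q = i},
            ENNReal.ofReal (dSide l₀ ((q : ↥TA) : ℤ × (Fin d → ℤ)).1 ^ β)
          ≤ ∑' r : {r | r ∈ T ∧ dSet d a₀ l₀ r ⊆ dSet d a₀ l₀ (c i)},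
            ENNReal.ofReal (dSide l₀ (r : ℤ × (Fin d → ℤ)).1 ^ β) := hle
        _ ≤ ENNReal.ofReal (2 * dSide l₀ (c i).1 ^ β) := hpack
        _ = 2 * ENNReal.ofReal (dSide l₀ (c i).1 ^ β) := by
            rw [ENNReal.ofReal_mul (by norm_num : (0:ℝ) ≤ 2)]
            norm_num
    · rw [Set.indicator_of_notMem hi]
      haveI : IsEmpty {q : ↥TA // σ q = i} :=
        ⟨fun q => hi ⟨(q : ↥TA), q.2⟩⟩
      rw [tsum_empty]
  -- bound for the TB part
  have hBbound : ∑' q : TB, ENNReal.ofReal (dSide l₀ (q : ℤ × (Fin d → ℤ)).1 ^ β) ≤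
      ∑' i : ℕ, Set.indicator IB (fun i => ENNReal.ofReal (dSide l₀ (c i).1 ^ β)) i := by
    have hstep : ∀ q : ↥TB, ENNReal.ofReal (dSide l₀ (q : ℤ × (Fin d → ℤ)).1 ^ β) ≤
        ∑' i : ↥{i | dSet d a₀ l₀ (c i) ⊆ dSet d a₀ l₀ (q : ℤ × (Fin d → ℤ))},
          ENNReal.ofReal (dSide l₀ (c (i : ℕ)).1 ^ β) := by
      intro q
      apply cover_lower hβ hβd hl₀ (fun i : ↥{i | dSet d a₀ l₀ (c i) ⊆
        dSet d a₀ l₀ (q : ℤ × (Fin d → ℤ))} => c (i : ℕ))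
      · intro x hx
        obtain ⟨i, hxi⟩ := Set.mem_iUnion.1 (hsubT _ q.2.1 hx)
        have hint : (dSet d a₀ l₀ (c i) ∩
            dSet d a₀ l₀ (q : ℤ × (Fin d → ℤ))).Nonempty := ⟨x, hxi, hx⟩
        rcases dSet_dichotomy hl₀ (c i) (q : ℤ × (Fin d → ℤ)) hint with h | h
        · exact Set.mem_iUnion.2 ⟨⟨i, h⟩, hxi⟩
        · exact absurd ⟨i, h⟩ q.2.2
      · intro i
        exact dSide_le_of_subset hd hl₀ i.2
    calc ∑' q : TB, ENNReal.ofReal (dSide l₀ (q : ℤ × (Fin d → ℤ)).1 ^ β)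
        ≤ ∑' q : ↥TB, ∑' i : ↥{i | dSet d a₀ l₀ (c i) ⊆
            dSet d a₀ l₀ (q : ℤ × (Fin d → ℤ))},
            ENNReal.ofReal (dSide l₀ (c (i : ℕ)).1 ^ β) :=
          ENNReal.tsum_le_tsum hstep
      _ = ∑' x : (Σ q : ↥TB, ↥{i | dSet d a₀ l₀ (c i) ⊆
            dSet d a₀ l₀ (q : ℤ × (Fin d → ℤ))}),
            ENNReal.ofReal (dSide l₀ (c ((x.2 : ℕ))).1 ^ β) :=
          (ENNReal.tsum_sigma _).symm
      _ ≤ ∑' i : ↥IB, ENNReal.ofReal (dSide l₀ (c ((i : ℕ))).1 ^ β) := by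
          apply Summable.tsum_le_tsum_of_inj
            (fun x : (Σ q : ↥TB, ↥{i | dSet d a₀ l₀ (c i) ⊆
              dSet d a₀ l₀ (q : ℤ × (Fin d → ℤ))}) =>
              (⟨(x.2 : ℕ), ⟨(x.1 : ℤ × (Fin d → ℤ)), x.1.2, x.2.2⟩⟩ : ↥IB))
          · rintro ⟨⟨q, hqTB⟩, ⟨i, hi⟩⟩ ⟨⟨q', hqTB'⟩, ⟨i', hi'⟩⟩ h
            have hii : i = i' := congrArg Subtype.val h
            subst hii
            have hqq : q = q' := by
              by_contra hne
              have hdisj := hS _ (hTS hqTB.1) _ (hTS hqTB'.1) hne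
              obtain ⟨x, hx⟩ := dSet_nonempty (a₀ := a₀) hl₀ (c i)
              exact Set.not_disjoint_iff.2 ⟨x, hi hx, hi' hx⟩ hdisj
            subst hqq
            rfl
          · exact fun _ _ => zero_le
          · exact fun _ => le_refl _
          · exact ENNReal.summable
          · exact ENNReal.summable
      _ = ∑' i : ℕ, Set.indicator IB
            (fun i => ENNReal.ofReal (dSide l₀ (c i).1 ^ β)) i := by
          rw [← tsum_subtype IB (fun i => ENNReal.ofReal (dSide l₀ (c i).1 ^ β))]
  -- combine
  have hsplit : ∑' p : T, ENNReal.ofReal (dSide l₀ (p : ℤ × (Fin d → ℤ)).1 ^ β) =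
      (∑' q : TA, ENNReal.ofReal (dSide l₀ (q : ℤ × (Fin d → ℤ)).1 ^ β)) +
      ∑' q : TB, ENNReal.ofReal (dSide l₀ (q : ℤ × (Fin d → ℤ)).1 ^ β) := by
    rw [hTeq]
    exact Summable.tsum_union_disjoint
      (f := fun r : ℤ × (Fin d → ℤ) => ENNReal.ofReal (dSide l₀ r.1 ^ β))
      hABdisj ENNReal.summable ENNReal.summable
  have hptwise : ∀ i : ℕ,
      Set.indicator IA (fun i => 2 * ENNReal.ofReal (dSide l₀ (c i).1 ^ β)) i +
      Set.indicator IB (fun i => ENNReal.ofReal (dSide l₀ (c i).1 ^ β)) i ≤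
      2 * ENNReal.ofReal (dSide l₀ (c i).1 ^ β) := by
    intro i
    by_cases hiA : i ∈ IA
    · have hiB : i ∉ IB := fun h => hIdisj.le_bot ⟨hiA, h⟩
      rw [Set.indicator_of_mem hiA, Set.indicator_of_notMem hiB, add_zero]
    · rw [Set.indicator_of_notMem hiA, zero_add]
      by_cases hiB : i ∈ IB
      · rw [Set.indicator_of_mem hiB]
        exact le_mul_of_one_le_left (zero_le) one_le_two
      · rw [Set.indicator_of_notMem hiB]
        exact zero_le
  calc ∑' p : T, ENNReal.ofReal (dSide l₀ (p : ℤ × (Fin d → ℤ)).1 ^ β)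
      = (∑' q : TA, ENNReal.ofReal (dSide l₀ (q : ℤ × (Fin d → ℤ)).1 ^ β)) +
        ∑' q : TB, ENNReal.ofReal (dSide l₀ (q : ℤ × (Fin d → ℤ)).1 ^ β) := hsplit
    _ ≤ (∑' i : ℕ, Set.indicator IA
          (fun i => 2 * ENNReal.ofReal (dSide l₀ (c i).1 ^ β)) i) +
        ∑' i : ℕ, Set.indicator IB
          (fun i => ENNReal.ofReal (dSide l₀ (c i).1 ^ β)) i :=
        add_le_add hAbound hBbound
    _ = ∑' i : ℕ, (Set.indicator IA
          (fun i => 2 * ENNReal.ofReal (dSide l₀ (c i).1 ^ β)) i +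
        Set.indicator IB (fun i => ENNReal.ofReal (dSide l₀ (c i).1 ^ β)) i) :=
        ENNReal.tsum_add.symm
    _ ≤ ∑' i : ℕ, 2 * ENNReal.ofReal (dSide l₀ (c i).1 ^ β) :=
        ENNReal.tsum_le_tsum hptwise
    _ = 2 * ∑' i, ENNReal.ofReal (dSide l₀ (c i).1 ^ β) := ENNReal.tsum_mul_left

end PackingAux10
/-- Packing lemma for non-overlapping dyadic cubes. -/
theorem packing_lemma (d : ℕ) (β : ℝ) (hβ : 0 < β) (hβd : β ≤ d)
    (a₀ : Fin d → ℝ) (l₀ : ℝ) (hl₀ : 0 < l₀)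
    (S : Set (ℤ × (Fin d → ℤ)))
    (hS : ∀ p ∈ S, ∀ q ∈ S, p ≠ q → Disjoint (dSet d a₀ l₀ p) (dSet d a₀ l₀ q)) :
    ∃ T ⊆ S,
      (∀ Q : ℤ × (Fin d → ℤ),
          ∑' p : {p // p ∈ T ∧ dSet d a₀ l₀ p ⊆ dSet d a₀ l₀ Q},
              ENNReal.ofReal (dSide l₀ p.1.1 ^ β) ≤
            ENNReal.ofReal (2 * dSide l₀ Q.1 ^ β)) ∧
      dContent d β a₀ l₀ (⋃ p ∈ S, dSet d a₀ l₀ p) ≤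
          ∑' p : T, ENNReal.ofReal (dSide l₀ p.1.1 ^ β) ∧
      ∑' p : T, ENNReal.ofReal (dSide l₀ p.1.1 ^ β) ≤
          2 * dContent d β a₀ l₀ (⋃ p ∈ S, dSet d a₀ l₀ p) := by
  have hd : 0 < d := by
    by_contra h
    push_neg at h
    have hd0 : d = 0 := Nat.le_zero.1 (Nat.lt_succ_iff.1 (Nat.lt_succ_of_le h))
    rw [hd0] at hβd
    norm_num at hβd
    linarith
  obtain ⟨T, ⟨hTS, hTp⟩, hmax⟩ :=
    exists_maximal_packs (d := d) (β := β) (a₀ := a₀) (l₀ := l₀) S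
  refine ⟨T, hTS, fun Q => packs_tsum hTp Q, content_le_selected hd hβ hl₀ hS hTS hTp hmax, ?_⟩
  by_cases hHtop : dContent d β a₀ l₀ (⋃ p ∈ S, dSet d a₀ l₀ p) = ∞
  · rw [hHtop, ENNReal.mul_top (by norm_num : (2:ℝ≥0∞) ≠ 0)]
    exact le_top
  · apply ENNReal.le_of_forall_pos_le_add
    intro ε hε _
    have hδ0 : ((ε : ℝ≥0∞) / 2) ≠ 0 := by
      simp only [ne_eq, ENNReal.div_eq_zero_iff, ENNReal.ofNat_ne_top, or_false]
      exact_mod_cast hε.ne'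
    have hlt : dContent d β a₀ l₀ (⋃ p ∈ S, dSet d a₀ l₀ p) <
        dContent d β a₀ l₀ (⋃ p ∈ S, dSet d a₀ l₀ p) + (ε : ℝ≥0∞) / 2 :=
      ENNReal.lt_add_right hHtop hδ0
    rw [dContent] at hlt
    obtain ⟨c, hc⟩ := iInf_lt_iff.1 hlt
    obtain ⟨hcov, hsum⟩ := iInf_lt_iff.1 hc
    have hkey := selected_le_cover hd hβ hβd hl₀ hS hTS hTp c hcov
    calc ∑' p : T, ENNReal.ofReal (dSide l₀ p.1.1 ^ β)
        ≤ 2 * ∑' i, ENNReal.ofReal (dSide l₀ (c i).1 ^ β) := hkey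
      _ ≤ 2 * (dContent d β a₀ l₀ (⋃ p ∈ S, dSet d a₀ l₀ p) + (ε : ℝ≥0∞) / 2) :=
          mul_le_mul_right hsum.le _
      _ = 2 * dContent d β a₀ l₀ (⋃ p ∈ S, dSet d a₀ l₀ p) + ε := by
          rw [mul_add]
          congr 1
          rw [two_mul, ENNReal.add_halves]
end
end

section
/- Dimension-change inequality for Choquet integrals: for f ≥ 0 and 0 < α ≤ β ≤ d, ∫_{ℝ^d} f dH^β_∞ ≤ (β/α) (∫_{ℝ^d} f^{α/β} dH^α_∞)^{β/α}. -/
open MeasureTheory Set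
open scoped ENNReal NNReal

noncomputable section

-- finset superadditivity of rpow for p ≥ 1
theorem my_sum_rpow_le_rpow_sum {ι : Type*} (s : Finset ι) (a : ι → ℝ≥0∞) {p : ℝ} (hp : 1 ≤ p) :
    ∑ i ∈ s, a i ^ p ≤ (∑ i ∈ s, a i) ^ p := by
  classical
  induction s using Finset.induction with
  | empty => simp [ENNReal.zero_rpow_of_pos (lt_of_lt_of_le one_pos hp)]
  | insert _ _ hj ih =>
    rw [Finset.sum_insert hj, Finset.sum_insert hj]
    exact le_trans (add_le_add_right ih _) (ENNReal.add_rpow_le_rpow_add _ _ hp)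

-- tsum subadditivity of rpow for 0 < q ≤ 1
theorem my_rpow_tsum_le_tsum_rpow {ι : Type*} (a : ι → ℝ≥0∞) {q : ℝ} (hq0 : 0 < q)
    (hq1 : q ≤ 1) : (∑' i, a i) ^ q ≤ ∑' i, a i ^ q := by
  have hp : 1 ≤ q⁻¹ := one_le_inv_iff₀.2 ⟨hq0, hq1⟩
  have key : ∑' i, a i ≤ (∑' i, a i ^ q) ^ q⁻¹ := by
    rw [ENNReal.tsum_eq_iSup_sum]
    refine iSup_le fun s => ?_
    calc ∑ i ∈ s, a i = ∑ i ∈ s, (a i ^ q) ^ q⁻¹ := by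
          simp [← ENNReal.rpow_mul, mul_inv_cancel₀ hq0.ne']
      _ ≤ (∑ i ∈ s, a i ^ q) ^ q⁻¹ := my_sum_rpow_le_rpow_sum s _ hp
      _ ≤ (∑' i, a i ^ q) ^ q⁻¹ := by
          gcongr
          exact ENNReal.sum_le_tsum s
  calc (∑' i, a i) ^ q ≤ ((∑' i, a i ^ q) ^ q⁻¹) ^ q := by gcongr
    _ = ∑' i, a i ^ q := by rw [← ENNReal.rpow_mul, inv_mul_cancel₀ hq0.ne', ENNReal.rpow_one]

theorem my_omega_pos {β : ℝ} (hβ : 0 ≤ β) : 0 < omegaConst β := by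
  have h1 : (0:ℝ) < β / 2 + 1 := by linarith
  exact div_pos (Real.rpow_pos_of_pos Real.pi_pos _) (Real.Gamma_pos_of_pos h1)

-- log Γ(1+x)/x is monotone:  Γ(1+x) ≤ Γ(1+y)^(x/y) for 0 < x ≤ y
theorem my_gamma_ineq {x y : ℝ} (hx : 0 < x) (hxy : x ≤ y) :
    Real.Gamma (x + 1) ≤ Real.Gamma (y + 1) ^ (x / y) := by
  have hy : 0 < y := lt_of_lt_of_le hx hxy
  have h1 : (1:ℝ) ∈ Set.Ioi (0:ℝ) := by norm_num
  have hx1 : x + 1 ∈ Set.Ioi (0:ℝ) := by simp; linarith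
  have hy1 : y + 1 ∈ Set.Ioi (0:ℝ) := by simp; linarith
  have hs := Real.convexOn_log_Gamma.secant_mono h1 hx1 hy1 (by linarith) (by linarith)
    (by linarith)
  simp only [Function.comp_apply, Real.Gamma_one, Real.log_one, sub_zero, add_sub_cancel_right]
    at hs
  -- hs : log Γ(x+1) / x ≤ log Γ(y+1) / y
  have hG : 0 < Real.Gamma (y + 1) := Real.Gamma_pos_of_pos (by linarith)
  rw [Real.rpow_def_of_pos hG, ← Real.log_le_iff_le_exp (Real.Gamma_pos_of_pos (by linarith))]
  have := mul_le_mul_of_nonneg_left hs hx.le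
  calc Real.log (Real.Gamma (x+1)) = x * (Real.log (Real.Gamma (x+1)) / x) := by
        field_simp
    _ ≤ x * (Real.log (Real.Gamma (y+1)) / y) := this
    _ = Real.log (Real.Gamma (y+1)) * (x / y) := by ring

theorem my_omega_rpow_le {α β : ℝ} (hα : 0 < α) (hαβ : α ≤ β) :
    omegaConst β ^ (α / β) ≤ omegaConst α := by
  have hβ : 0 < β := lt_of_lt_of_le hα hαβ
  have hπ : (0:ℝ) < Real.pi := Real.pi_pos
  have hGβ : 0 < Real.Gamma (β / 2 + 1) := Real.Gamma_pos_of_pos (by linarith)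
  have hGα : 0 < Real.Gamma (α / 2 + 1) := Real.Gamma_pos_of_pos (by linarith)
  unfold omegaConst
  rw [Real.div_rpow (Real.rpow_pos_of_pos hπ _).le hGβ.le, ← Real.rpow_mul hπ.le,
    show β / 2 * (α / β) = α / 2 by field_simp]
  have key : Real.Gamma (α / 2 + 1) ≤ Real.Gamma (β / 2 + 1) ^ (α / β) := by
    have := my_gamma_ineq (x := α / 2) (y := β / 2) (by linarith) (by linarith)
    rwa [show (α/2)/(β/2) = α/β by field_simp] at this
  gcongr

theorem my_hContent_mono (d : ℕ) (β : ℝ) {E E' : Set (Rd d)} (h : E ⊆ E') :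
    hContent d β E ≤ hContent d β E' :=
  le_iInf₂ fun c hc => iInf₂_le c (h.trans hc)

theorem my_hContent_le_rpow (d : ℕ) {α β : ℝ} (hα : 0 < α) (hαβ : α ≤ β) (E : Set (Rd d)) :
    hContent d β E ≤ hContent d α E ^ (β / α) := by
  have hβ : 0 < β := lt_of_lt_of_le hα hαβ
  set q : ℝ := α / β with hqdef
  have hq0 : 0 < q := div_pos hα hβ
  have hq1 : q ≤ 1 := (div_le_one hβ).2 hαβ
  have key : hContent d β E ^ q ≤ hContent d α E := by
    refine le_iInf₂ fun c hc => ?_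
    set c' : ℕ → Rd d × ℝ := fun i => ((c i).1, max (c i).2 0) with hc'def
    have cover' : E ⊆ ⋃ i, Metric.ball (c' i).1 (c' i).2 :=
      hc.trans (Set.iUnion_mono fun i => Metric.ball_subset_ball (le_max_left _ _))
    have h1 : hContent d β E ≤ ∑' i, ENNReal.ofReal (omegaConst β * (c' i).2 ^ β) :=
      iInf₂_le c' cover'
    have h3 : ∀ i, ENNReal.ofReal (omegaConst β * (c' i).2 ^ β) ^ q ≤
        ENNReal.ofReal (omegaConst α * (c i).2 ^ α) := by
      intro i
      have hr' : 0 ≤ (c' i).2 := le_max_right _ _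
      have hb : 0 ≤ omegaConst β * (c' i).2 ^ β :=
        mul_nonneg (my_omega_pos hβ.le).le (Real.rpow_nonneg hr' _)
      rw [ENNReal.ofReal_rpow_of_nonneg hb hq0.le,
        Real.mul_rpow (my_omega_pos hβ.le).le (Real.rpow_nonneg hr' _),
        ← Real.rpow_mul hr', show β * q = α by rw [hqdef]; field_simp]
      rcases le_or_gt (c i).2 0 with h | h
      · simp [hc'def, max_eq_right h, Real.zero_rpow hα.ne']
      · have h2 : (c' i).2 = (c i).2 := max_eq_left h.le
        rw [h2]
        exact ENNReal.ofReal_le_ofReal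
          (mul_le_mul_of_nonneg_right (my_omega_rpow_le hα hαβ) (Real.rpow_nonneg h.le _))
    calc hContent d β E ^ q
        ≤ (∑' i, ENNReal.ofReal (omegaConst β * (c' i).2 ^ β)) ^ q := by gcongr
      _ ≤ ∑' i, ENNReal.ofReal (omegaConst β * (c' i).2 ^ β) ^ q :=
          my_rpow_tsum_le_tsum_rpow _ hq0 hq1
      _ ≤ ∑' i, ENNReal.ofReal (omegaConst α * (c i).2 ^ α) := ENNReal.tsum_le_tsum h3
  calc hContent d β E = (hContent d β E ^ q) ^ (β / α) := by
        rw [← ENNReal.rpow_mul, show q * (β / α) = 1 by rw [hqdef]; field_simp, ENNReal.rpow_one]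
    _ ≤ hContent d α E ^ (β / α) := by gcongr

theorem my_lintegral_image {s : Set ℝ} {f f' : ℝ → ℝ} (hs : MeasurableSet s)
    (hf' : ∀ x ∈ s, HasDerivWithinAt f (f' x) s x) (hf : Set.InjOn f s) (g : ℝ → ℝ≥0∞) :
    ∫⁻ x in f '' s, g x = ∫⁻ x in s, ENNReal.ofReal |f' x| * g (f x) := by
  simpa only [ContinuousLinearMap.det_toSpanSingleton] using
    lintegral_image_eq_lintegral_abs_det_fderiv_mul volume hs
      (fun x hx => (hf' x hx).hasFDerivWithinAt) hf g

theorem my_rpow_image {q : ℝ} (hq : 0 < q) :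
    (fun t : ℝ => t ^ q) '' Set.Ioi 0 = Set.Ioi (0:ℝ) := by
  ext y
  constructor
  · rintro ⟨x, hx, rfl⟩
    exact Real.rpow_pos_of_pos hx _
  · intro hy
    exact ⟨y ^ q⁻¹, Real.rpow_pos_of_pos hy _, by
      show (y ^ q⁻¹) ^ q = y
      rw [← Real.rpow_mul (le_of_lt hy), inv_mul_cancel₀ hq.ne', Real.rpow_one]⟩

theorem my_subst {q : ℝ} (hq : 0 < q) (g : ℝ → ℝ≥0∞) :
    ∫⁻ s in Set.Ioi (0:ℝ), g s =
      ∫⁻ t in Set.Ioi (0:ℝ), ENNReal.ofReal (q * t ^ (q - 1)) * g (t ^ q) := by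
  have hderiv : ∀ x ∈ Set.Ioi (0:ℝ),
      HasDerivWithinAt (fun t : ℝ => t ^ q) (q * x ^ (q - 1)) (Set.Ioi 0) x :=
    fun x hx => (Real.hasDerivAt_rpow_const (Or.inl (ne_of_gt hx))).hasDerivWithinAt
  have hinj : Set.InjOn (fun t : ℝ => t ^ q) (Set.Ioi 0) :=
    fun a ha b hb hab => by
      have : StrictMonoOn (fun t : ℝ => t ^ q) (Set.Ioi 0) :=
        fun x hx y _ hxy => Real.rpow_lt_rpow (le_of_lt hx) hxy hq
      exact this.injOn ha hb hab
  have := my_lintegral_image measurableSet_Ioi hderiv hinj g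
  rw [my_rpow_image hq] at this
  rw [this]
  refine setLIntegral_congr_fun measurableSet_Ioi (fun t ht => ?_)
  rw [abs_of_pos (mul_pos hq (Real.rpow_pos_of_pos ht _))]

theorem my_cheb {φ : ℝ → ℝ≥0∞} (hφ : Antitone φ) (σ : ℝ) :
    ENNReal.ofReal σ * φ σ ≤ ∫⁻ s in Set.Ioi (0:ℝ), φ s := by
  calc ENNReal.ofReal σ * φ σ = ∫⁻ _ in Set.Ioc (0:ℝ) σ, φ σ := by
        rw [setLIntegral_const, Real.volume_Ioc, sub_zero, mul_comm]
    _ ≤ ∫⁻ s in Set.Ioc (0:ℝ) σ, φ s :=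
        setLIntegral_mono' measurableSet_Ioc fun x hx => hφ hx.2
    _ ≤ ∫⁻ s in Set.Ioi (0:ℝ), φ s := lintegral_mono_set Set.Ioc_subset_Ioi_self

/-- Dimension-change inequality for Choquet integrals. -/
theorem choquet_dimension_change (d : ℕ) (α β : ℝ) (hα : 0 < α) (hαβ : α ≤ β)
    (hβd : β ≤ d) (f : Rd d → ℝ) (hf : ∀ x, 0 ≤ f x) :
    choquet d (hContent d β) Set.univ f ≤
      ENNReal.ofReal (β / α) *
        (choquet d (hContent d α) Set.univ (fun x => f x ^ (α / β))) ^ (β / α) := by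
  have hβ : 0 < β := lt_of_lt_of_le hα hαβ
  set q : ℝ := α / β with hqdef
  set p : ℝ := β / α with hpdef
  have hq0 : 0 < q := div_pos hα hβ
  have hp0 : 0 < p := div_pos hβ hα
  have hp1 : 1 ≤ p := (one_le_div hα).2 hαβ
  have hpq : q * p = 1 := by rw [hqdef, hpdef]; field_simp
  set φ : ℝ → ℝ≥0∞ := fun s => hContent d α {x | x ∈ Set.univ ∧ s < f x ^ q} with hφdef
  have hφanti : Antitone φ := fun s s' h =>
    my_hContent_mono d α fun x hx => ⟨hx.1, lt_of_le_of_lt h hx.2⟩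
  set I : ℝ≥0∞ := ∫⁻ s in Set.Ioi (0:ℝ), φ s with hIdef
  have hIeq : choquet d (hContent d α) Set.univ (fun x => f x ^ q) = I := rfl
  have hgoal : choquet d (hContent d β) Set.univ f =
      ∫⁻ t in Set.Ioi (0:ℝ), hContent d β {x | x ∈ Set.univ ∧ t < f x} := rfl
  rw [hIeq, hgoal]
  -- the set identity
  have hset : ∀ t : ℝ, 0 < t →
      {x : Rd d | x ∈ Set.univ ∧ t < f x} = {x | x ∈ Set.univ ∧ t ^ q < f x ^ q} := by
    intro t ht
    ext x
    simp only [Set.mem_setOf_eq, Set.mem_univ, true_and]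
    exact (Real.rpow_lt_rpow_iff ht.le (hf x) hq0).symm
  have hFle : ∀ t : ℝ, 0 < t →
      hContent d β {x | x ∈ Set.univ ∧ t < f x} ≤ φ (t ^ q) ^ p := by
    intro t ht
    rw [hset t ht]
    exact my_hContent_le_rpow d hα hαβ _
  rcases eq_or_ne I ⊤ with hI | hItop
  · rw [hI, ENNReal.top_rpow_of_pos hp0, ENNReal.mul_top (by positivity)]
    exact le_top
  rcases eq_or_ne I 0 with hI0 | hI0
  · have hφ0 : ∀ s : ℝ, 0 < s → φ s = 0 := by
      intro s hs
      have := my_cheb hφanti s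
      rw [← hIdef, hI0, le_zero_iff, mul_eq_zero] at this
      rcases this with h | h
      · exact absurd h (by simp [ENNReal.ofReal_eq_zero, not_le, hs])
      · exact h
    have : ∀ t : ℝ, t ∈ Set.Ioi (0:ℝ) →
        hContent d β {x | x ∈ Set.univ ∧ t < f x} ≤ 0 := by
      intro t ht
      calc hContent d β {x | x ∈ Set.univ ∧ t < f x} ≤ φ (t ^ q) ^ p := hFle t ht
        _ = 0 := by rw [hφ0 _ (Real.rpow_pos_of_pos ht _), ENNReal.zero_rpow_of_pos hp0]
    calc (∫⁻ t in Set.Ioi (0:ℝ), hContent d β {x | x ∈ Set.univ ∧ t < f x})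
        ≤ ∫⁻ _ in Set.Ioi (0:ℝ), 0 := setLIntegral_mono measurable_const this
      _ = 0 := by simp
      _ ≤ _ := zero_le
  -- main case : 0 < I < ∞
  have hpt : ∀ t : ℝ, t ∈ Set.Ioi (0:ℝ) →
      hContent d β {x | x ∈ Set.univ ∧ t < f x} ≤
        I ^ (p - 1) * (ENNReal.ofReal (t ^ (q - 1)) * φ (t ^ q)) := by
    intro t ht
    have htq : 0 < t ^ q := Real.rpow_pos_of_pos ht _
    have hc0 : ENNReal.ofReal (t ^ q) ≠ 0 := by simp [ENNReal.ofReal_eq_zero, not_le, htq]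
    have hctop : ENNReal.ofReal (t ^ q) ≠ ⊤ := ENNReal.ofReal_ne_top
    have hcheb : φ (t ^ q) ≤ I / ENNReal.ofReal (t ^ q) := by
      rw [ENNReal.le_div_iff_mul_le (Or.inl hc0) (Or.inl hctop), mul_comm]
      exact my_cheb hφanti _
    rcases eq_or_ne (φ (t ^ q)) 0 with h0 | h0
    · calc hContent d β {x | x ∈ Set.univ ∧ t < f x} ≤ φ (t ^ q) ^ p := hFle t ht
        _ = 0 := by rw [h0, ENNReal.zero_rpow_of_pos hp0]
        _ ≤ _ := zero_le
    have hφtop : φ (t ^ q) ≠ ⊤ :=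
      ne_top_of_le_ne_top (ENNReal.div_lt_top hItop hc0).ne hcheb
    have hsplit : φ (t ^ q) ^ p = φ (t ^ q) * φ (t ^ q) ^ (p - 1) := by
      calc φ (t ^ q) ^ p = φ (t ^ q) ^ ((1:ℝ) + (p - 1)) := by rw [show (1:ℝ)+(p-1) = p by ring]
        _ = φ (t ^ q) ^ (1:ℝ) * φ (t ^ q) ^ (p - 1) := ENNReal.rpow_add _ _ h0 hφtop
        _ = φ (t ^ q) * φ (t ^ q) ^ (p - 1) := by rw [ENNReal.rpow_one]
    have hkey : ENNReal.ofReal (t ^ q) ^ (p - 1) ≠ 0 ∧ ENNReal.ofReal (t ^ q) ^ (p-1) ≠ ⊤ := by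
      constructor
      · simp [ENNReal.rpow_eq_zero_iff, hc0, hctop]
      · simp [ENNReal.rpow_eq_top_iff, hc0, hctop]
    have hinv : (ENNReal.ofReal (t ^ q) ^ (p - 1))⁻¹ = ENNReal.ofReal (t ^ (q - 1)) := by
      rw [← ENNReal.rpow_neg, ENNReal.ofReal_rpow_of_pos htq,
        ← Real.rpow_mul ht.le, show q * -(p-1) = q - 1 by
          have : q * p = 1 := hpq
          nlinarith [hpq]]
    calc hContent d β {x | x ∈ Set.univ ∧ t < f x} ≤ φ (t ^ q) ^ p := hFle t ht
      _ = φ (t ^ q) * φ (t ^ q) ^ (p - 1) := hsplit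
      _ ≤ φ (t ^ q) * (I / ENNReal.ofReal (t ^ q)) ^ (p - 1) := by
          gcongr
      _ = φ (t ^ q) * (I ^ (p-1) / ENNReal.ofReal (t ^ q) ^ (p-1)) := by
          rw [ENNReal.div_rpow_of_nonneg _ _ (by linarith)]
      _ = I ^ (p - 1) * (ENNReal.ofReal (t ^ (q - 1)) * φ (t ^ q)) := by
          rw [div_eq_mul_inv, hinv]; ring
  have hφm : Measurable φ := hφanti.measurable
  have hbm : Measurable fun t : ℝ =>
      I ^ (p - 1) * (ENNReal.ofReal (t ^ (q - 1)) * φ (t ^ q)) := by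
    apply Measurable.const_mul
    exact ((measurable_id.pow measurable_const).ennreal_ofReal).mul
      (hφm.comp (measurable_id.pow measurable_const))
  have hJ : (∫⁻ t in Set.Ioi (0:ℝ), ENNReal.ofReal (t ^ (q - 1)) * φ (t ^ q)) =
      ENNReal.ofReal p * I := by
    have h1 : I = ∫⁻ t in Set.Ioi (0:ℝ),
        ENNReal.ofReal q * (ENNReal.ofReal (t ^ (q - 1)) * φ (t ^ q)) := by
      rw [hIdef, my_subst hq0 φ]
      refine setLIntegral_congr_fun measurableSet_Ioi
        (fun t ht => ?_)
      rw [ENNReal.ofReal_mul hq0.le, mul_assoc]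
    rw [lintegral_const_mul' _ _ ENNReal.ofReal_ne_top] at h1
    calc (∫⁻ t in Set.Ioi (0:ℝ), ENNReal.ofReal (t ^ (q - 1)) * φ (t ^ q))
        = 1 * (∫⁻ t in Set.Ioi (0:ℝ), ENNReal.ofReal (t ^ (q - 1)) * φ (t ^ q)) := by
          rw [one_mul]
      _ = ENNReal.ofReal p * I := by
          rw [h1, ← mul_assoc, ← ENNReal.ofReal_mul hp0.le,
            show p * q = 1 by rw [mul_comm]; exact hpq, ENNReal.ofReal_one]
  calc (∫⁻ t in Set.Ioi (0:ℝ), hContent d β {x | x ∈ Set.univ ∧ t < f x})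
      ≤ ∫⁻ t in Set.Ioi (0:ℝ), I ^ (p - 1) * (ENNReal.ofReal (t ^ (q - 1)) * φ (t ^ q)) :=
        setLIntegral_mono hbm hpt
    _ = I ^ (p - 1) * (∫⁻ t in Set.Ioi (0:ℝ), ENNReal.ofReal (t ^ (q - 1)) * φ (t ^ q)) :=
        lintegral_const_mul' _ _ (ENNReal.rpow_ne_top_of_nonneg (by linarith) hItop)
    _ = I ^ (p - 1) * (ENNReal.ofReal p * I) := by rw [hJ]
    _ = ENNReal.ofReal p * (I ^ (p - 1) * I ^ (1:ℝ)) := by rw [ENNReal.rpow_one]; ring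
    _ = ENNReal.ofReal p * I ^ p := by
        rw [← ENNReal.rpow_add _ _ hI0 hItop, show p - 1 + 1 = p by ring]
end
end
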